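/- arXiv:0910.4826 — 4 statements merged into one kernel-verified Lean document; each statement's English description precedes it below -/
import Mathlib

section
/- For all natural numbers k, r, s with r + s ≥ k, the Gaussian binomial coefficients satisfy the q-Vandermonde identity: ∑_{i+j=k, i≤s, j≤r} binom(r,j)_q · binom(s,i)_q · q^{i(r−j)} = binom(r+s,k)_q. -/
/-- The Gaussian (q-)binomial coefficient, defined by the q-Pascal recursion. -/
def qbinom {R : Type*} [CommRing R] (q : R) : ℕ → ℕ → R
  | _, 0 => 1
  | 0, _ + 1 => 0
  | n + 1, k + 1 => qbinom q n k + q ^ (k + 1) * qbinom q n (k + 1)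

lemma qbinom_zero {R : Type*} [CommRing R] (q : R) (n : ℕ) : qbinom q n 0 = 1 := by
  cases n <;> rfl

lemma qbinom_eq_zero {R : Type*} [CommRing R] (q : R) :
    ∀ n k : ℕ, n < k → qbinom q n k = 0 := by
  intro n
  induction n with
  | zero => intro k hk; match k, hk with | k + 1, _ => rfl
  | succ n ih =>
    intro k hk
    match k, hk with
    | k + 1, hk =>
      show qbinom q n k + q ^ (k + 1) * qbinom q n (k + 1) = 0
      rw [ih k (by omega), ih (k + 1) (by omega)]
      ring

lemma qbinom_succ {R : Type*} [CommRing R] (q : R) (n j : ℕ) :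
    qbinom q (n + 1) j =
      (if j = 0 then 0 else qbinom q n (j - 1)) + q ^ j * qbinom q n j := by
  match j with
  | 0 => simp [qbinom_zero]
  | j + 1 => simp [qbinom]

lemma qbinom_vandermonde_aux {R : Type*} [CommRing R] (q : R) (r : ℕ) :
    ∀ s k : ℕ,
    ∑ ij ∈ Finset.HasAntidiagonal.antidiagonal k,
        qbinom q r ij.2 * qbinom q s ij.1 * q ^ (ij.1 * (r - ij.2)) =
      qbinom q (r + s) k := by
  induction r with
  | zero =>
    intro s k
    induction k with
    | zero => simp [qbinom_zero]
    | succ k ihk =>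
      rw [Finset.Nat.sum_antidiagonal_succ']
      have h0 : ∀ p ∈ Finset.HasAntidiagonal.antidiagonal k,
          qbinom q 0 (p.2 + 1) * qbinom q s p.1 * q ^ (p.1 * (0 - (p.2 + 1))) = 0 := by
        intro p _
        rw [qbinom_eq_zero q 0 (p.2 + 1) (by omega)]
        ring
      rw [Finset.sum_congr rfl h0]
      simp [qbinom_zero]
  | succ r ih =>
    intro s k
    have key : ∀ ij : ℕ × ℕ, ij ∈ Finset.HasAntidiagonal.antidiagonal k →
        qbinom q (r + 1) ij.2 * qbinom q s ij.1 * q ^ (ij.1 * (r + 1 - ij.2)) =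
        ((if ij.2 = 0 then 0 else qbinom q r (ij.2 - 1)) * qbinom q s ij.1 *
          q ^ (ij.1 * (r + 1 - ij.2))) +
        q ^ k * (qbinom q r ij.2 * qbinom q s ij.1 * q ^ (ij.1 * (r - ij.2))) := by
      intro ij hij
      rw [qbinom_succ]
      rcases le_or_gt ij.2 r with hle | hlt
      · have h2 : ij.1 * (r + 1 - ij.2) = ij.1 * (r - ij.2) + ij.1 := by
          have h3 : r + 1 - ij.2 = (r - ij.2) + 1 := by omega
          rw [h3, Nat.mul_add, Nat.mul_one]
        rw [h2]
        have hq : q ^ ij.2 * q ^ (ij.1 * (r - ij.2) + ij.1) =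
            q ^ k * q ^ (ij.1 * (r - ij.2)) := by
          rw [← pow_add, ← pow_add]
          congr 1
          have := Finset.HasAntidiagonal.mem_antidiagonal.mp hij
          omega
        linear_combination (qbinom q r ij.2 * qbinom q s ij.1) * hq
      · rw [qbinom_eq_zero q r ij.2 hlt]
        ring
    rw [Finset.sum_congr rfl key, Finset.sum_add_distrib, ← Finset.mul_sum, ih s k]
    match k with
    | 0 =>
      simp [qbinom_zero]
    | k + 1 =>
      rw [Finset.Nat.sum_antidiagonal_succ']
      have this2 : ∀ p ∈ Finset.HasAntidiagonal.antidiagonal k,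
          (if p.2 + 1 = 0 then 0 else qbinom q r (p.2 + 1 - 1)) * qbinom q s p.1 *
            q ^ (p.1 * (r + 1 - (p.2 + 1))) =
          qbinom q r p.2 * qbinom q s p.1 * q ^ (p.1 * (r - p.2)) := by
        intro p _
        simp
      rw [Finset.sum_congr rfl this2, ih s k, if_pos rfl]
      have h4 : r + 1 + s = (r + s) + 1 := by omega
      rw [h4]
      show _ = qbinom q (r + s) k + q ^ (k + 1) * qbinom q (r + s) (k + 1)
      ring

/-- The q-Vandermonde identity: for `k ≤ r + s`,
`∑_{i+j=k, i≤s, j≤r} [r,j]_q [s,i]_q q^{i(r-j)} = [r+s, k]_q`. -/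
theorem qbinom_vandermonde {R : Type*} [CommRing R] (q : R) (k r s : ℕ)
    (h : k ≤ r + s) :
    ∑ ij ∈ (Finset.HasAntidiagonal.antidiagonal k).filter (fun ij => ij.1 ≤ s ∧ ij.2 ≤ r),
        qbinom q r ij.2 * qbinom q s ij.1 * q ^ (ij.1 * (r - ij.2)) =
      qbinom q (r + s) k := by
  rw [← qbinom_vandermonde_aux q r s k]
  apply Finset.sum_filter_of_ne
  intro ij _ hne
  by_contra hc
  push_neg at hc
  rcases le_or_gt ij.1 s with h1 | h1
  · exact hne (by rw [qbinom_eq_zero q r ij.2 (hc h1)]; ring)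
  · exact hne (by rw [qbinom_eq_zero q s ij.1 h1]; ring)
end

section
/- The radical of an iterative q-difference ideal in an iterative q-difference ring is again an iterative q-difference ideal (i.e. it is stable under all δ^{(k)}). -/
/-- An iterative `q`-difference ring structure on a commutative ring `R`,
relative to distinguished elements `q` and `t` of `R` (the images of the root
of unity `q ∈ C` and of the variable `t ∈ C(t)`).  It consists of a ring
automorphism `σ` (extending `f(t) ↦ f(qt)`) and a family of additive maps
`δ^{(k)}` satisfying `δ^{(0)} = id`, `δ^{(1)} = (σ − id)/((q−1)t)`, the twisted
Leibniz rule, and the iteration rule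
`δ^{(i)} ∘ δ^{(j)} = [i+j, i]_q δ^{(i+j)}`. -/
structure IDqRing (R : Type*) [CommRing R] (q t : R) where
  σ : R ≃+* R
  δ : ℕ → R →+ R
  δ_zero : ∀ a : R, δ 0 a = a
  δ_one : ∀ a : R, (q - 1) * t * δ 1 a = σ a - a
  σ_q : σ q = q
  σ_t : σ t = q * t
  δ_q : ∀ k, 0 < k → δ k q = 0
  δ_t : ∀ k, 1 < k → δ k t = 0
  leibniz : ∀ (k : ℕ) (a b : R),
    δ k (a * b) = ∑ ij ∈ Finset.HasAntidiagonal.antidiagonal k, (⇑σ)^[ij.1] (δ ij.2 a) * δ ij.1 b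
  iter : ∀ (i j : ℕ) (a : R), δ i (δ j a) = qbinom q (i + j) i * δ (i + j) a


section Aux
variable {R : Type*} [CommRing R] (q t : R)

lemma qbinom_zero_right (n : ℕ) : qbinom q n 0 = 1 := by cases n <;> rfl

lemma qbinom_succ_one (n : ℕ) : qbinom q (n + 1) 1 = 1 + q * qbinom q n 1 := by
  show qbinom q (n + 1) (0 + 1) = _
  rw [qbinom, qbinom_zero_right]; ring

lemma qbinom_geom (K : ℕ) : (q - 1) * qbinom q K 1 = q ^ K - 1 := by
  induction K with
  | zero => show (q - 1) * qbinom q 0 (0 + 1) = _; rw [qbinom]; simp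
  | succ n ih => rw [qbinom_succ_one]; ring_nf; ring_nf at ih; linear_combination q * ih

noncomputable def sigC (m l : ℕ) : R := q ^ (l.choose 2) * ∏ j ∈ Finset.range l, (q ^ (m - j) - 1)

lemma sigC_zero (m : ℕ) : sigC q m 0 = 1 := by simp [sigC]

lemma sigC_top (m : ℕ) : sigC q m (m + 1) = 0 := by
  unfold sigC
  rw [Finset.prod_eq_zero (Finset.self_mem_range_succ m) (by simp), mul_zero]

lemma sigC_rec (m l : ℕ) (h : l ≤ m) :
    sigC q (m + 1) (l + 1)
      = q ^ (l + 1) * sigC q m (l + 1)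
        + q ^ l * ((q - 1) * qbinom q (l + 1) 1) * sigC q m l := by
  have hch : (l + 1).choose 2 = l + l.choose 2 := by
    rw [Nat.choose_succ_succ, Nat.choose_one_right]
  have hq1 : q ^ (l + 1) * q ^ (m - l) = q ^ (m + 1) := by
    rw [← pow_add]; congr 1; omega
  rw [qbinom_geom]
  unfold sigC
  rw [Finset.prod_range_succ' (fun j => q ^ (m + 1 - j) - 1) l]
  simp only [Nat.succ_sub_succ, Nat.sub_zero]
  rw [Finset.prod_range_succ (fun j => q ^ (m - j) - 1) l]
  rw [hch]
  linear_combination (- q ^ (l + Nat.choose l 2) * (∏ j ∈ Finset.range l, (q ^ (m - j) - 1))) * hq1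

variable (D : IDqRing R q t)

lemma sigma_eq (z : R) : D.σ z = z + (q - 1) * t * D.δ 1 z := by
  linear_combination - D.δ_one z

lemma sigma_sigC (m l : ℕ) : D.σ (sigC q m l) = sigC q m l := by
  unfold sigC
  rw [map_mul, map_pow, D.σ_q, map_prod]
  congr 1
  refine Finset.prod_congr rfl fun j _ => ?_
  rw [map_sub, map_pow, D.σ_q, map_one]

lemma delta_one_delta (l : ℕ) (z : R) :
    D.δ 1 (D.δ l z) = qbinom q (l + 1) 1 * D.δ (l + 1) z := by
  have h := D.iter 1 l z
  rwa [Nat.add_comm 1 l] at h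

lemma sigma_pow_expand (m : ℕ) (z : R) :
    (⇑D.σ)^[m] z = ∑ l ∈ Finset.range (m + 1), sigC q m l * t ^ l * D.δ l z := by
  induction m with
  | zero => simp [sigC_zero, D.δ_zero]
  | succ m ih =>
    rw [Function.iterate_succ_apply', ih, map_sum]
    have hterm : ∀ l, D.σ (sigC q m l * t ^ l * D.δ l z)
        = q ^ l * sigC q m l * t ^ l * D.δ l z
          + q ^ l * ((q - 1) * qbinom q (l + 1) 1) * sigC q m l * t ^ (l + 1) * D.δ (l + 1) z := by
      intro l
      rw [map_mul, map_mul, sigma_sigC, map_pow, D.σ_t, sigma_eq q t D (D.δ l z),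
        delta_one_delta]
      ring
    rw [Finset.sum_congr rfl fun l _ => hterm l, Finset.sum_add_distrib]
    rw [Finset.sum_range_succ' (fun l => sigC q (m + 1) l * t ^ l * D.δ l z) (m + 1)]
    have hre : ∀ l ∈ Finset.range (m + 1),
        sigC q (m + 1) (l + 1) * t ^ (l + 1) * D.δ (l + 1) z
          = q ^ (l + 1) * sigC q m (l + 1) * t ^ (l + 1) * D.δ (l + 1) z
            + q ^ l * ((q - 1) * qbinom q (l + 1) 1) * sigC q m l * t ^ (l + 1) * D.δ (l + 1) z := by
      intro l hl
      rw [sigC_rec q m l (Nat.lt_succ_iff.mp (Finset.mem_range.mp hl))]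
      ring
    rw [Finset.sum_congr rfl hre, Finset.sum_add_distrib]
    have hX : (∑ l ∈ Finset.range (m + 1), q ^ l * sigC q m l * t ^ l * D.δ l z)
        = (∑ l ∈ Finset.range (m + 1),
            q ^ (l + 1) * sigC q m (l + 1) * t ^ (l + 1) * D.δ (l + 1) z)
          + sigC q (m + 1) 0 * t ^ 0 * D.δ 0 z := by
      rw [Finset.sum_range_succ' (fun l => q ^ l * sigC q m l * t ^ l * D.δ l z) m]
      rw [Finset.sum_range_succ
        (fun l => q ^ (l + 1) * sigC q m (l + 1) * t ^ (l + 1) * D.δ (l + 1) z) m]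
      simp [sigC_top, sigC_zero, D.δ_zero]
    rw [hX]; ring

variable (I : Ideal R) (hI : ∀ k : ℕ, ∀ a ∈ I, D.δ k a ∈ I)
include hI

lemma sigma_mem_I {x : R} (hx : x ∈ I) : D.σ x ∈ I := by
  rw [sigma_eq q t D x]
  exact I.add_mem hx (I.mul_mem_left _ (hI 1 x hx))

lemma sigma_mem_radical {x : R} (hx : x ∈ I.radical) : D.σ x ∈ I.radical := by
  obtain ⟨n, hn⟩ := Ideal.mem_radical_iff.mp hx
  exact Ideal.mem_radical_iff.mpr ⟨n, by rw [← map_pow]; exact sigma_mem_I q t D I hI hn⟩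

lemma sigma_iter_mem_radical (i : ℕ) {x : R} (hx : x ∈ I.radical) :
    (⇑D.σ)^[i] x ∈ I.radical := by
  induction i with
  | zero => simpa using hx
  | succ i ih => rw [Function.iterate_succ_apply']; exact sigma_mem_radical q t D I hI ih

lemma delta_pow_mem (a : R) (K : ℕ) (ha : ∀ j, j < K → D.δ j a ∈ I.radical) :
    ∀ m, ∀ i, i < m * K → D.δ i (a ^ m) ∈ I.radical := by
  intro m
  induction m with
  | zero => intro i hi; simp at hi
  | succ m ihm =>
    intro i hi
    rw [pow_succ', D.leibniz]
    refine Ideal.sum_mem _ fun ij hij => ?_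
    have hsum : ij.1 + ij.2 = i := Finset.HasAntidiagonal.mem_antidiagonal.mp hij
    by_cases h2 : ij.2 < K
    · exact Ideal.mul_mem_right _ _
        (sigma_iter_mem_radical q t D I hI ij.1 (ha ij.2 h2))
    · push_neg at h2
      refine Ideal.mul_mem_left _ _ (ihm ij.1 ?_)
      have hsm : (m + 1) * K = m * K + K := by ring
      rw [hsm] at hi
      have h3 : ij.1 + K ≤ i := hsum ▸ Nat.add_le_add_left h2 ij.1
      exact Nat.lt_of_add_lt_add_right (lt_of_le_of_lt h3 hi)

lemma prod_expand (a : R) (K : ℕ) (ha : ∀ j, j < K → D.δ j a ∈ I.radical) :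
    ∀ m, D.δ (m * K) (a ^ m)
        - (∏ r ∈ Finset.range m, (⇑D.σ)^[r * K] (D.δ K a)) ∈ I.radical := by
  intro m
  induction m with
  | zero => simp [D.δ_zero]
  | succ m ih =>
    have hp0 : ((m * K, K) : ℕ × ℕ) ∈ Finset.HasAntidiagonal.antidiagonal ((m + 1) * K) := by
      rw [Finset.HasAntidiagonal.mem_antidiagonal]; ring
    have h2 : (∑ ij ∈ (Finset.HasAntidiagonal.antidiagonal ((m + 1) * K)).erase (m * K, K),
        (⇑D.σ)^[ij.1] (D.δ ij.2 a) * D.δ ij.1 (a ^ m)) ∈ I.radical := by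
      refine Ideal.sum_mem _ fun ij hij => ?_
      obtain ⟨hne, hmem⟩ := Finset.mem_erase.mp hij
      have hsum : ij.1 + ij.2 = (m + 1) * K := Finset.HasAntidiagonal.mem_antidiagonal.mp hmem
      by_cases hc : ij.2 < K
      · exact Ideal.mul_mem_right _ _
          (sigma_iter_mem_radical q t D I hI ij.1 (ha ij.2 hc))
      · push_neg at hc
        rcases eq_or_lt_of_le hc with heq | hlt
        · exfalso
          apply hne
          have h1 : ij.1 = m * K := by
            have hsm : (m + 1) * K = m * K + K := by ring
            omega
          exact Prod.ext h1 heq.symm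
        · refine Ideal.mul_mem_left _ _ (delta_pow_mem q t D I hI a K ha m ij.1 ?_)
          have hsm : (m + 1) * K = m * K + K := by ring
          omega
    have h1 : (⇑D.σ)^[m * K] (D.δ K a)
        * (D.δ (m * K) (a ^ m) - ∏ r ∈ Finset.range m, (⇑D.σ)^[r * K] (D.δ K a))
        ∈ I.radical := Ideal.mul_mem_left _ _ ih
    have h3 := Ideal.add_mem _ h1 h2
    have heq : D.δ ((m + 1) * K) (a ^ (m + 1))
        - (∏ r ∈ Finset.range (m + 1), (⇑D.σ)^[r * K] (D.δ K a))
        = (⇑D.σ)^[m * K] (D.δ K a)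
            * (D.δ (m * K) (a ^ m) - ∏ r ∈ Finset.range m, (⇑D.σ)^[r * K] (D.δ K a))
          + ∑ ij ∈ (Finset.HasAntidiagonal.antidiagonal ((m + 1) * K)).erase (m * K, K),
              (⇑D.σ)^[ij.1] (D.δ ij.2 a) * D.δ ij.1 (a ^ m) := by
      rw [pow_succ', D.leibniz, Finset.prod_range_succ,
        ← Finset.add_sum_erase _ _ hp0]
      ring
    rw [heq]
    exact h3

omit hI in
lemma prime_prod_mem {P : Ideal R} (hP : P.IsPrime) (f : ℕ → R) :
    ∀ m, (∏ r ∈ Finset.range m, f r) ∈ P → ∃ r, r < m ∧ f r ∈ P := by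
  intro m
  induction m with
  | zero =>
    intro h
    simp only [Finset.range_zero, Finset.prod_empty] at h
    exact absurd (P.eq_top_iff_one.mpr h) hP.ne_top
  | succ m ih =>
    intro h
    rw [Finset.prod_range_succ] at h
    rcases hP.mem_or_mem h with h' | h'
    · obtain ⟨r, hr, hfr⟩ := ih h'
      exact ⟨r, Nat.lt_succ_of_lt hr, hfr⟩
    · exact ⟨m, Nat.lt_succ_self m, h'⟩


theorem radical_IDq_ideal' :
    ∀ k : ℕ, ∀ a ∈ I.radical, D.δ k a ∈ I.radical := by
  intro k a ha
  induction k using Nat.strong_induction_on with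
  | _ k IH =>
  match k with
  | 0 => rw [D.δ_zero]; exact ha
  | (K + 1) =>
    -- a ^ m ∈ I with m ≥ 1
    obtain ⟨m₀, hm₀⟩ := Ideal.mem_radical_iff.mp ha
    have hm : a ^ (m₀ + 1) ∈ I := by rw [pow_succ]; exact I.mul_mem_right a hm₀
    set m := m₀ + 1 with hmdef
    set b := D.δ (K + 1) a with hbdef
    have ha' : ∀ j, j < K + 1 → D.δ j a ∈ I.radical := fun j hj => IH j hj
    rw [Ideal.radical_eq_sInf]
    refine Submodule.mem_sInf.mpr fun P hPmem => ?_
    obtain ⟨hIP, hP⟩ := hPmem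
    have hradP : I.radical ≤ P := hP.radical_le_iff.mpr hIP
    -- the product of σ-twists of b lies in P
    have hprod := prod_expand q t D I hI a (K + 1) ha' m
    have hδI : D.δ (m * (K + 1)) (a ^ m) ∈ P := hIP (hI _ _ hm)
    have hX : (∏ r ∈ Finset.range m, (⇑D.σ)^[r * (K + 1)] b) ∈ P := by
      have h := P.sub_mem hδI (hradP hprod)
      simpa using h
    obtain ⟨r, _, hr⟩ := prime_prod_mem hP
      (fun r => (⇑D.σ)^[r * (K + 1)] b) m hX
    by_cases hu : (q - 1) * t ∈ P
    · -- σ is the identity modulo P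
      have hstep : ∀ z : R, D.σ z - z ∈ P := by
        intro z
        rw [← D.δ_one z]
        exact Ideal.mul_mem_right _ _ hu
      have hiter : ∀ i : ℕ, ∀ z : R, (⇑D.σ)^[i] z - z ∈ P := by
        intro i
        induction i with
        | zero => intro z; simp
        | succ i ih =>
          intro z
          have h1 := ih (D.σ z)
          have h2 := hstep z
          have := P.add_mem h1 h2
          rw [Function.iterate_succ_apply]
          convert this using 1
          ring
      have := P.sub_mem hr (hiter (r * (K + 1)) b)
      simpa using this
    · -- key relation : (q-1)t·[K+1]_q·b ∈ P
      have hy : D.δ K a ∈ I.radical := IH K (Nat.lt_succ_self K)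
      have hδ1y : D.δ 1 (D.δ K a) = qbinom q (K + 1) 1 * b :=
        delta_one_delta q t D K a
      have hkey : (q - 1) * t * (qbinom q (K + 1) 1 * b) ∈ P := by
        have h1 := D.δ_one (D.δ K a)
        rw [hδ1y] at h1
        rw [h1]
        exact P.sub_mem (hradP (sigma_mem_radical q t D I hI hy)) (hradP hy)
      rcases hP.mem_or_mem hkey with h | h
      · exact absurd h hu
      rcases hP.mem_or_mem h with h | h
      · -- qbinom q (K+1) 1 ∈ P, hence q^(K+1) - 1 ∈ P, hence σ^[r(K+1)] ≡ id on b mod P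
        have hq1 : q ^ (K + 1) - 1 ∈ P := by
          rw [← qbinom_geom q (K + 1)]
          exact Ideal.mul_mem_left _ _ h
        have hqr : q ^ (r * (K + 1)) - 1 ∈ P := by
          rw [mul_comm r (K + 1), pow_mul, ← geom_sum_mul]
          exact Ideal.mul_mem_left _ _ hq1
        have hC : ∀ l : ℕ, sigC q (r * (K + 1)) (l + 1) ∈ P := by
          intro l
          refine Ideal.mul_mem_left _ _ ?_
          have h0 : (0 : ℕ) ∈ Finset.range (l + 1) := by simp
          have hd : (q ^ (r * (K + 1) - 0) - 1) ∣
              ∏ j ∈ Finset.range (l + 1), (q ^ (r * (K + 1) - j) - 1) :=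
            Finset.dvd_prod_of_mem _ h0
          rw [Nat.sub_zero] at hd
          obtain ⟨c, hc⟩ := hd
          rw [hc]
          exact Ideal.mul_mem_right _ _ hqr
        have hσb : (⇑D.σ)^[r * (K + 1)] b - b ∈ P := by
          have he := sigma_pow_expand q t D (r * (K + 1)) b
          rw [Finset.sum_range_succ'] at he
          simp only [sigC_zero, pow_zero, D.δ_zero, one_mul, mul_one] at he
          rw [he]
          have : (∑ l ∈ Finset.range (r * (K + 1)),
              sigC q (r * (K + 1)) (l + 1) * t ^ (l + 1) * D.δ (l + 1) b) + b - b
              = ∑ l ∈ Finset.range (r * (K + 1)),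
                  sigC q (r * (K + 1)) (l + 1) * t ^ (l + 1) * D.δ (l + 1) b := by ring
          rw [this]
          exact Ideal.sum_mem _ fun l _ =>
            Ideal.mul_mem_right _ _ (Ideal.mul_mem_right _ _ (hC l))
        have := P.sub_mem hr hσb
        simpa using this
      · exact h

end Aux

/-- The radical of an iterative `q`-difference ideal (an ideal stable under all
`δ^{(k)}`) is again an iterative `q`-difference ideal. Here `q` is a primitive
`n`-th root of unity. -/
theorem radical_IDq_ideal {R : Type*} [CommRing R] (q t : R) (n : ℕ)
    (hq : IsPrimitiveRoot q n) (D : IDqRing R q t) (I : Ideal R)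
    (hI : ∀ k : ℕ, ∀ a ∈ I, D.δ k a ∈ I) :
    ∀ k : ℕ, ∀ a ∈ I.radical, D.δ k a ∈ I.radical :=
  fun k a ha => radical_IDq_ideal' q t D I hI k a ha
end

section
/- Let (K, δ*) be an iterative q-difference field whose field of constants is C. If x₁, …, x_r ∈ K are linearly independent over C, then the iterative Taylor series T_{x₁}, …, T_{x_r} ∈ K[[T]] (with T_x = ∑_k δ^{(k)}(x) T^k) are linearly independent over K. -/
/- Auxiliary lemmas -/

lemma idq_iter_one {K : Type*} [Field K] {q t : K} (D : IDqRing K q t) (m : ℕ) :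
    (⇑D.σ)^[m] (1 : K) = 1 := by
  induction m with
  | zero => simp
  | succ n ih => rw [Function.iterate_succ_apply', ih, map_one]

lemma idq_iter_zero {K : Type*} [Field K] {q t : K} (D : IDqRing K q t) (m : ℕ) :
    (⇑D.σ)^[m] (0 : K) = 0 := by
  induction m with
  | zero => simp
  | succ n ih => rw [Function.iterate_succ_apply', ih, map_zero]

lemma idq_symm_iter_zero {K : Type*} [Field K] {q t : K} (D : IDqRing K q t) (m : ℕ) :
    (⇑D.σ.symm)^[m] (0 : K) = 0 := by
  induction m with
  | zero => simp
  | succ n ih => rw [Function.iterate_succ_apply', ih, map_zero]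

lemma idq_iter_left_inv {K : Type*} [Field K] {q t : K} (D : IDqRing K q t) (m : ℕ) (z : K) :
    (⇑D.σ)^[m] ((⇑D.σ.symm)^[m] z) = z := by
  induction m generalizing z with
  | zero => simp
  | succ n ih =>
    rw [Function.iterate_succ_apply' (⇑D.σ.symm), Function.iterate_succ_apply (⇑D.σ),
      RingEquiv.apply_symm_apply, ih]

/-- `δ^{(k)} 1 = 0` for `k ≥ 1`. -/
lemma idq_delta_one {K : Type*} [Field K] {q t : K} (D : IDqRing K q t) :
    ∀ k : ℕ, 0 < k → D.δ k 1 = 0 := by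
  intro k
  induction k using Nat.strong_induction_on with
  | _ k ih =>
    intro hk
    obtain ⟨k', rfl⟩ : ∃ k', k = k' + 1 := ⟨k - 1, (Nat.succ_pred_eq_of_pos hk).symm⟩
    have h := D.leibniz (k' + 1) 1 1
    rw [one_mul, Finset.Nat.sum_antidiagonal_eq_sum_range_succ_mk,
      Finset.sum_range_succ] at h
    have hmid : ∑ j ∈ Finset.range (k' + 1),
        (⇑D.σ)^[j] (D.δ (k' + 1 - j) 1) * D.δ j 1 = D.δ (k' + 1) 1 := by
      rw [Finset.sum_eq_single_of_mem 0 (Finset.mem_range.2 (Nat.succ_pos _))]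
      · simp [D.δ_zero]
      · intro b hb hb0
        rw [ih b (Finset.mem_range.1 hb) (Nat.pos_of_ne_zero hb0), mul_zero]
    rw [hmid, Nat.sub_self, D.δ_zero, idq_iter_one, one_mul] at h
    -- h : D.δ (k'+1) 1 = D.δ (k'+1) 1 + D.δ (k'+1) 1
    linear_combination -h

/-- Transport a linear relation through `σ^{-m}`. -/
lemma idq_symm_transport {K : Type*} [Field K] {q t : K} (D : IDqRing K q t) {r : ℕ} :
    ∀ (m : ℕ) (c y : Fin r → K), (∑ i, c i * (⇑D.σ)^[m] (y i)) = 0 →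
      ∑ i, (⇑D.σ.symm)^[m] (c i) * y i = 0 := by
  intro m
  induction m with
  | zero => intro c y h; simpa using h
  | succ n ih =>
    intro c y h
    have h1 : ∑ i, c i * (⇑D.σ)^[n] ((⇑D.σ) (y i)) = 0 := by
      simpa [Function.iterate_succ_apply] using h
    have h2 := ih c (fun i => D.σ (y i)) h1
    have h3 : ∑ i, D.σ.symm ((⇑D.σ.symm)^[n] (c i) * D.σ (y i)) = 0 := by
      rw [← map_sum, h2, map_zero]
    simpa [map_mul, RingEquiv.symm_apply_apply, Function.iterate_succ_apply'] using h3

/-- In an iterative `q`-difference field `K` with field of constants `C`, elements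
`x₁, …, x_r` that are linearly independent over the constants have iterative
Taylor series `T_{x_i} = ∑_k δ^{(k)}(x_i) T^k` that are linearly independent over
`K`. -/
theorem taylor_series_linearIndependent {K : Type*} [Field K] (q t : K)
    (D : IDqRing K q t) (r : ℕ) (x : Fin r → K)
    (hx : ∀ c : Fin r → K, (∀ i, ∀ k, 0 < k → D.δ k (c i) = 0) →
      ∑ i, c i * x i = 0 → ∀ i, c i = 0) :
    ∀ a : Fin r → K, (∀ k : ℕ, ∑ i, a i * D.δ k (x i) = 0) → ∀ i, a i = 0 := by
  classical
  suffices H : ∀ s : ℕ, ∀ a : Fin r → K,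
      (Finset.univ.filter fun i => a i ≠ 0).card ≤ s →
      (∀ k : ℕ, ∑ i, a i * D.δ k (x i) = 0) → ∀ i, a i = 0 by
    intro a ha i
    exact H _ a le_rfl ha i
  intro s
  induction s with
  | zero =>
    intro a hcard hrel i
    by_contra hne
    have hmem : i ∈ Finset.univ.filter fun i => a i ≠ 0 := by
      simp [hne]
    have := Finset.card_pos.2 ⟨i, hmem⟩
    omega
  | succ s ih =>
    intro a hcard hrel
    by_cases h0 : ∀ i, a i = 0
    · exact h0
    push_neg at h0
    obtain ⟨i₀, hi₀⟩ := h0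
    set a' : Fin r → K := fun i => (a i₀)⁻¹ * a i with ha'def
    have hrel' : ∀ k : ℕ, ∑ i, a' i * D.δ k (x i) = 0 := by
      intro k
      have : ∑ i, a' i * D.δ k (x i) = (a i₀)⁻¹ * ∑ i, a i * D.δ k (x i) := by
        rw [Finset.mul_sum]
        exact Finset.sum_congr rfl fun i _ => by rw [ha'def]; ring
      rw [this, hrel k, mul_zero]
    by_cases hconst : ∀ m : ℕ, 0 < m → ∀ i, D.δ m (a' i) = 0
    · -- all normalized coefficients are constants: apply hx
      have hsum0 : ∑ i, a' i * x i = 0 := by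
        have := hrel' 0
        have e : ∀ i : Fin r, a' i * D.δ 0 (x i) = a' i * x i := fun i => by
          rw [D.δ_zero]
        rwa [Finset.sum_congr rfl fun i _ => e i] at this
      have hz := hx a' (fun i k hk => hconst k hk i) hsum0
      have h1 : (1 : K) = 0 := by
        rw [← inv_mul_cancel₀ hi₀]
        exact hz i₀
      exact absurd h1 one_ne_zero
    · push_neg at hconst
      -- hconst : ∃ m, 0 < m ∧ ∃ i, D.δ m (a' i) ≠ 0
      set m := Nat.find hconst with hmdef
      obtain ⟨hmpos, j₁, hj₁⟩ := Nat.find_spec hconst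
      have hsmall : ∀ j, 0 < j → j < m → ∀ i, D.δ j (a' i) = 0 := by
        intro j hj hjm i
        by_contra hne
        exact Nat.find_min hconst hjm ⟨hj, i, hne⟩
      -- the key relation: ∑ i, δ^m(a' i) * σ^m(δ^k(x i)) = 0 for all k
      have key : ∀ k : ℕ, ∑ i, D.δ m (a' i) * (⇑D.σ)^[m] (D.δ k (x i)) = 0 := by
        intro k
        have e0 : ∑ i, D.δ m (D.δ k (x i) * a' i) = 0 := by
          rw [← map_sum]
          have hsw : ∑ i, D.δ k (x i) * a' i = 0 := by
            rw [Finset.sum_congr rfl fun i _ => mul_comm (D.δ k (x i)) (a' i), hrel' k]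
          rw [hsw, map_zero]
        have e1 : ∀ i : Fin r, D.δ m (D.δ k (x i) * a' i)
            = ∑ j ∈ Finset.range (m + 1),
                (⇑D.σ)^[j] (D.δ (m - j) (D.δ k (x i))) * D.δ j (a' i) := by
          intro i
          rw [D.leibniz, Finset.Nat.sum_antidiagonal_eq_sum_range_succ_mk]
        rw [Finset.sum_congr rfl fun i _ => e1 i, Finset.sum_comm] at e0
        obtain ⟨m', hm'⟩ : ∃ m', m = m' + 1 := ⟨m - 1, (Nat.succ_pred_eq_of_pos hmpos).symm⟩
        rw [hm', Finset.sum_range_succ] at e0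
        have emid : ∑ j ∈ Finset.range (m' + 1),
            ∑ i, (⇑D.σ)^[j] (D.δ (m' + 1 - j) (D.δ k (x i))) * D.δ j (a' i) = 0 := by
          rw [Finset.sum_eq_single_of_mem 0 (Finset.mem_range.2 (Nat.succ_pos _))]
          · have eterm : ∀ i : Fin r,
                (⇑D.σ)^[0] (D.δ (m' + 1 - 0) (D.δ k (x i))) * D.δ 0 (a' i)
                = qbinom q (m' + 1 + k) (m' + 1) * (a' i * D.δ (m' + 1 + k) (x i)) := by
              intro i
              simp only [Function.iterate_zero, id, Nat.sub_zero, D.δ_zero, D.iter]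
              ring
            rw [Finset.sum_congr rfl fun i _ => eterm i, ← Finset.mul_sum,
              hrel' (m' + 1 + k), mul_zero]
          · intro b hb hb0
            have hz : ∀ i, D.δ b (a' i) = 0 := by
              intro i
              exact hsmall b (Nat.pos_of_ne_zero hb0)
                (by rw [hm']; exact Finset.mem_range.1 hb) i
            simp [hz]
        rw [emid, zero_add, Nat.sub_self] at e0
        rw [hm']
        have efin : ∀ i : Fin r,
            D.δ (m' + 1) (a' i) * (⇑D.σ)^[m' + 1] (D.δ k (x i))
            = (⇑D.σ)^[m' + 1] (D.δ 0 (D.δ k (x i))) * D.δ (m' + 1) (a' i) := by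
          intro i
          rw [D.δ_zero]
          ring
        rw [Finset.sum_congr rfl fun i _ => efin i]
        exact e0
      -- transport through σ^{-m}
      set b : Fin r → K := fun i => (⇑D.σ.symm)^[m] (D.δ m (a' i)) with hbdef
      have hrelb : ∀ k : ℕ, ∑ i, b i * D.δ k (x i) = 0 := by
        intro k
        exact idq_symm_transport D m (fun i => D.δ m (a' i)) (fun i => D.δ k (x i)) (key k)
      have hsub : (Finset.univ.filter fun i => b i ≠ 0)
          ⊆ (Finset.univ.filter fun i => a i ≠ 0).erase i₀ := by
        intro i hi
        rw [Finset.mem_filter] at hi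
        rw [Finset.mem_erase, Finset.mem_filter]
        refine ⟨?_, Finset.mem_univ i, ?_⟩
        · rintro rfl
          apply hi.2
          rw [hbdef]
          simp only
          rw [ha'def]
          simp only
          rw [inv_mul_cancel₀ hi₀, idq_delta_one D m hmpos, idq_symm_iter_zero]
        · intro hia
          apply hi.2
          rw [hbdef]
          simp only
          rw [ha'def]
          simp only
          rw [hia, mul_zero, map_zero, idq_symm_iter_zero]
      have hcard' : (Finset.univ.filter fun i => b i ≠ 0).card ≤ s := by
        have hm0 : i₀ ∈ Finset.univ.filter fun i => a i ≠ 0 := by simp [hi₀]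
        have h1 := Finset.card_le_card hsub
        have h2 := Finset.card_erase_of_mem hm0
        have h3 := Finset.card_pos.2 ⟨i₀, hm0⟩
        omega
      have hb0 := ih b hcard' hrelb
      have hzero : D.δ m (a' j₁) = 0 := by
        have h := congrArg ((⇑D.σ)^[m]) (hb0 j₁)
        rw [hbdef] at h
        simp only at h
        rw [idq_iter_left_inv, idq_iter_zero] at h
        exact h
      exact (hj₁ hzero).elim
end

section
/- Let L be an iterative q-difference field with algebraically closed field of constants C(L), and let R be a simple iterative q-difference ring over L, finitely generated as an L-algebra. Then R is reduced, and the total ring of fractions E of R satisfies C(E) = C(L). -/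
namespace IDqRingAux

variable {R : Type*} [CommRing R] {q t : R} (D : IDqRing R q t)

lemma sigma_iter_one (i : ℕ) : (⇑D.σ)^[i] (1 : R) = 1 := by
  induction i with
  | zero => rfl
  | succ n ih => rw [Function.iterate_succ_apply', ih, map_one]

lemma sigma_iter_nil {x : R} (hx : x ∈ nilradical R) (i : ℕ) :
    (⇑D.σ)^[i] x ∈ nilradical R := by
  induction i with
  | zero => exact hx
  | succ n ih =>
    rw [Function.iterate_succ_apply']
    obtain ⟨m, hm⟩ := mem_nilradical.mp ih
    exact mem_nilradical.mpr ⟨m, by rw [← map_pow, hm, map_zero]⟩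

lemma delta_one (k : ℕ) (hk : 0 < k) : D.δ k (1 : R) = 0 := by
  induction k using Nat.strong_induction_on with
  | _ k ih =>
  have h := D.leibniz k 1 1
  rw [mul_one] at h
  have hsub : ({(k, 0), (0, k)} : Finset (ℕ × ℕ)) ⊆ Finset.HasAntidiagonal.antidiagonal k := by
    intro ij hij
    simp only [Finset.mem_insert, Finset.mem_singleton] at hij
    rcases hij with rfl | rfl <;> simp [Finset.HasAntidiagonal.mem_antidiagonal]
  have hvan : ∀ ij ∈ Finset.HasAntidiagonal.antidiagonal k, ij ∉ ({(k, 0), (0, k)} : Finset (ℕ × ℕ)) →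
      (⇑D.σ)^[ij.1] (D.δ ij.2 1) * D.δ ij.1 (1 : R) = 0 := by
    rintro ⟨i, j⟩ hij hne
    simp only [Finset.HasAntidiagonal.mem_antidiagonal] at hij
    simp only [Finset.mem_insert, Finset.mem_singleton, Prod.mk.injEq, not_or] at hne
    have hik : 0 < i ∧ i < k := by omega
    rw [ih i hik.2 hik.1, mul_zero]
  rw [← Finset.sum_subset hsub hvan, Finset.sum_pair (by
    intro hc
    have := (Prod.mk.injEq _ _ _ _).mp hc
    omega)] at h
  simp only [D.δ_zero, sigma_iter_one] at h
  -- h : D.δ k 1 = D.σ^[k] applied ... simplify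
  rw [one_mul] at h
  have h2 : D.δ k (1 : R) + D.δ k 1 = D.δ k 1 + 0 := by
    rw [add_zero]; exact (by simpa using h : D.δ k (1:R) = D.δ k 1 + D.δ k 1).symm
  exact add_left_cancel h2


open Ideal.Quotient in
lemma key_comm (k : ℕ) (a : R) (ha : ∀ j < k, D.δ j a ∈ nilradical R) (x : R) :
    Ideal.Quotient.mk (nilradical R) ((⇑D.σ)^[k] x * D.δ k a) =
      Ideal.Quotient.mk (nilradical R) (x * D.δ k a) := by
  set π := Ideal.Quotient.mk (nilradical R)
  have h1 := congrArg π (D.leibniz k x a)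
  have h2 := congrArg π (D.leibniz k a x)
  rw [mul_comm a x] at h2
  rw [map_sum] at h1 h2
  rw [Finset.sum_eq_single_of_mem (k, 0) (by simp [Finset.HasAntidiagonal.mem_antidiagonal]) ?v1] at h1
  rw [Finset.sum_eq_single_of_mem (0, k) (by simp [Finset.HasAntidiagonal.mem_antidiagonal]) ?v2] at h2
  case v1 =>
    rintro ⟨i, j⟩ hij hne
    simp only [Finset.HasAntidiagonal.mem_antidiagonal] at hij
    have hik : i < k := by
      rcases Nat.lt_or_ge i k with h | h
      · exact h
      · exact absurd (by simp only [Prod.mk.injEq]; omega : (i, j) = (k, 0)) hne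
    have : D.δ i a ∈ nilradical R := ha i hik
    rw [Ideal.Quotient.eq_zero_iff_mem.mpr (Ideal.mul_mem_left _ _ this)]
  case v2 =>
    rintro ⟨i, j⟩ hij hne
    simp only [Finset.HasAntidiagonal.mem_antidiagonal] at hij
    have hjk : j < k := by
      rcases Nat.lt_or_ge j k with h | h
      · exact h
      · exact absurd (by simp only [Prod.mk.injEq]; omega : (i, j) = (0, k)) hne
    have : (⇑D.σ)^[i] (D.δ j a) ∈ nilradical R := sigma_iter_nil D (ha j hjk) i
    rw [Ideal.Quotient.eq_zero_iff_mem.mpr (Ideal.mul_mem_right _ _ this)]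
  simp only [D.δ_zero, Function.iterate_zero_apply] at h1 h2
  rw [← h1, h2, mul_comm (D.δ k a) x]

lemma delta_nil_pow (n : ℕ) : ∀ a : R, a ^ (2 ^ n) = 0 → ∀ k, D.δ k a ∈ nilradical R := by
  induction n with
  | zero =>
    intro a ha k
    rw [pow_zero, pow_one] at ha
    rw [ha, map_zero]
    exact (nilradical R).zero_mem
  | succ n ih =>
    intro a ha k
    have hsq : (a * a) ^ (2 ^ n) = 0 := by
      rw [← pow_two, ← pow_mul]
      have he : 2 * 2 ^ n = 2 ^ (n + 1) := by ring
      rw [he]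
      exact ha
    have hall := ih (a * a) hsq
    induction k using Nat.strong_induction_on with
    | _ k ih2 =>
    set π := Ideal.Quotient.mk (nilradical R)
    have ha' : ∀ j < k, D.δ j a ∈ nilradical R := fun j hj => ih2 j hj
    have h := congrArg π (D.leibniz (k + k) a a)
    rw [map_sum] at h
    rw [Finset.sum_eq_single_of_mem (k, k) (by simp [Finset.HasAntidiagonal.mem_antidiagonal]) ?van] at h
    case van =>
      rintro ⟨i, j⟩ hij hne
      simp only [Finset.HasAntidiagonal.mem_antidiagonal] at hij
      rcases Nat.lt_or_ge j k with hj | hj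
      · have : (⇑D.σ)^[i] (D.δ j a) ∈ nilradical R := sigma_iter_nil D (ha' j hj) i
        rw [Ideal.Quotient.eq_zero_iff_mem.mpr (Ideal.mul_mem_right _ _ this)]
      · have hne' : ¬(i = k ∧ j = k) := fun ⟨ha1, ha2⟩ => hne (by simp [ha1, ha2])
        have hi : i < k := by omega
        rw [Ideal.Quotient.eq_zero_iff_mem.mpr (Ideal.mul_mem_left _ _ (ha' i hi))]
    have hz : π (D.δ (k + k) (a * a)) = 0 :=
      Ideal.Quotient.eq_zero_iff_mem.mpr (hall (k + k))
    rw [hz] at h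
    have h2 := key_comm D k a ha' (D.δ k a)
    have hmem : D.δ k a * D.δ k a ∈ nilradical R := by
      rw [← Ideal.Quotient.eq_zero_iff_mem, ← h2]
      exact h.symm
    obtain ⟨m, hm⟩ := mem_nilradical.mp hmem
    exact mem_nilradical.mpr ⟨2 * m, by rw [pow_mul, pow_two]; exact hm⟩

lemma reduced_of_simple
    (hsimple : ∀ I : Ideal R, (∀ k : ℕ, ∀ a ∈ I, D.δ k a ∈ I) → I = ⊥ ∨ I = ⊤) :
    IsReduced R := by
  have hstab : ∀ k : ℕ, ∀ a ∈ nilradical R, D.δ k a ∈ nilradical R := by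
    intro k a ha
    obtain ⟨n, hn⟩ := mem_nilradical.mp ha
    exact delta_nil_pow D n a (pow_eq_zero_of_le (Nat.le_of_lt (Nat.lt_two_pow_self (n := n))) hn) k
  rcases hsimple (nilradical R) hstab with h | h
  · refine ⟨fun x hx => ?_⟩
    have : x ∈ nilradical R := mem_nilradical.mpr hx
    rw [h] at this
    exact this
  · have h1 : (1 : R) ∈ nilradical R := h ▸ Submodule.mem_top
    obtain ⟨m, hm⟩ := mem_nilradical.mp h1
    rw [one_pow] at hm
    have : Subsingleton R := subsingleton_of_zero_eq_one hm.symm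
    exact ⟨fun x _ => Subsingleton.elim x 0⟩


lemma delta_mul_const (k : ℕ) (a v : R) (hv : ∀ m, 0 < m → D.δ m v = 0) :
    D.δ k (a * v) = D.δ k a * v := by
  rw [D.leibniz k a v]
  rw [Finset.sum_eq_single_of_mem (0, k) (by simp [Finset.HasAntidiagonal.mem_antidiagonal]) ?_]
  · rw [Function.iterate_zero_apply, D.δ_zero]
  · rintro ⟨i, j⟩ hij hne
    have hij' : i + j = k := Finset.HasAntidiagonal.mem_antidiagonal.mp hij
    have hi : 0 < i := by
      by_contra hcon
      push_neg at hcon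
      have hi0 : i = 0 := by omega
      subst hi0
      have hj : j = k := by omega
      subst hj
      exact hne rfl
    rw [hv i hi, mul_zero]

lemma const_mul (u v : R) (hu : ∀ m, 0 < m → D.δ m u = 0) (hv : ∀ m, 0 < m → D.δ m v = 0) :
    ∀ m, 0 < m → D.δ m (u * v) = 0 := by
  intro m hm
  rw [delta_mul_const D m u v hv, hu m hm, zero_mul]

lemma const_pow (v : R) (hv : ∀ m, 0 < m → D.δ m v = 0) (i : ℕ) :
    ∀ m, 0 < m → D.δ m (v ^ i) = 0 := by
  induction i with
  | zero => intro m hm; rw [pow_zero]; exact delta_one D m hm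
  | succ i ih =>
    intro m hm
    rw [pow_succ]
    exact const_mul D _ v ih hv m hm

end IDqRingAux


namespace GLAux
open Polynomial

/-- Decompose `p = u * w` with `u` coprime to `g` and `w` dividing a power of `g`. -/
lemma exists_coprime_factor {K : Type*} [Field K] [DecidableEq K] (g : K[X]) (hg : g ≠ 0) :
    ∀ (n : ℕ) (p : K[X]), p ≠ 0 → p.natDegree ≤ n →
      ∃ u w : K[X], p = u * w ∧ IsCoprime u g ∧ w ∣ g ^ p.natDegree := by
  intro n
  induction n with
  | zero =>
    intro p hp0 hpn
    have hcop : IsCoprime p g := by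
      by_cases hu : IsUnit (EuclideanDomain.gcd p g)
      · have hbez := EuclideanDomain.gcd_eq_gcd_ab p g
        obtain ⟨v, hv⟩ := hu
        refine ⟨(v⁻¹ : K[X]ˣ) * EuclideanDomain.gcdA p g,
          (v⁻¹ : K[X]ˣ) * EuclideanDomain.gcdB p g, ?_⟩
        have : ((v⁻¹ : K[X]ˣ) : K[X]) * (EuclideanDomain.gcd p g) = 1 := by
          rw [← hv]; exact Units.inv_mul v
        calc ((v⁻¹ : K[X]ˣ) : K[X]) * EuclideanDomain.gcdA p g * p +
            ((v⁻¹ : K[X]ˣ) : K[X]) * EuclideanDomain.gcdB p g * g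
            = ((v⁻¹ : K[X]ˣ) : K[X]) * (p * EuclideanDomain.gcdA p g + g * EuclideanDomain.gcdB p g) := by ring
          _ = 1 := by rw [← hbez, this]
      · exfalso
        have hg0 : EuclideanDomain.gcd p g ≠ 0 := fun h =>
          hp0 (EuclideanDomain.gcd_eq_zero_iff.mp h).1
        have hd : (EuclideanDomain.gcd p g).natDegree = 0 := by
          have hdvd := EuclideanDomain.gcd_dvd_left p g
          have := Polynomial.natDegree_le_of_dvd hdvd hp0
          omega
        obtain ⟨c, hc⟩ := Polynomial.natDegree_eq_zero.mp hd
        apply hu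
        rw [← hc]
        exact (Polynomial.isUnit_C).mpr (isUnit_iff_ne_zero.mpr (by
          intro h0; apply hg0; rw [← hc, h0, map_zero]))
    exact ⟨p, 1, (mul_one p).symm, hcop, one_dvd _⟩
  | succ n ih =>
    intro p hp0 hpn
    by_cases hu : IsUnit (EuclideanDomain.gcd p g)
    · have hbez := EuclideanDomain.gcd_eq_gcd_ab p g
      obtain ⟨v, hv⟩ := hu
      have hone : ((v⁻¹ : K[X]ˣ) : K[X]) * (EuclideanDomain.gcd p g) = 1 := by
        rw [← hv]; exact Units.inv_mul v
      refine ⟨p, 1, (mul_one p).symm, ⟨(v⁻¹ : K[X]ˣ) * EuclideanDomain.gcdA p g,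
        (v⁻¹ : K[X]ˣ) * EuclideanDomain.gcdB p g, ?_⟩, one_dvd _⟩
      calc ((v⁻¹ : K[X]ˣ) : K[X]) * EuclideanDomain.gcdA p g * p +
          ((v⁻¹ : K[X]ˣ) : K[X]) * EuclideanDomain.gcdB p g * g
          = ((v⁻¹ : K[X]ˣ) : K[X]) * (p * EuclideanDomain.gcdA p g + g * EuclideanDomain.gcdB p g) := by ring
        _ = 1 := by rw [← hbez, hone]
    · set h := EuclideanDomain.gcd p g with hh
      have hh0 : h ≠ 0 := fun h0 => hp0 (EuclideanDomain.gcd_eq_zero_iff.mp h0).1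
      obtain ⟨p₂, hp₂⟩ := EuclideanDomain.gcd_dvd_left p g
      have hp₂0 : p₂ ≠ 0 := by rintro rfl; rw [mul_zero] at hp₂; exact hp0 hp₂
      have hdeg : p.natDegree = h.natDegree + p₂.natDegree := by
        rw [hp₂]; exact Polynomial.natDegree_mul hh0 hp₂0
      have hh1 : 1 ≤ h.natDegree := by
        by_contra hcon
        obtain ⟨c, hc⟩ := Polynomial.natDegree_eq_zero.mp (by omega : h.natDegree = 0)
        exact hu (hc ▸ (Polynomial.isUnit_C).mpr (isUnit_iff_ne_zero.mpr (by
          intro h0; apply hh0; rw [← hc, h0, map_zero])))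
      have hle : p₂.natDegree ≤ n := by omega
      obtain ⟨u, w, hw1, hw2, hw3⟩ := ih p₂ hp₂0 hle
      refine ⟨u, w * h, by rw [hp₂, hw1]; ring, hw2, ?_⟩
      have h1 : w * h ∣ g ^ p₂.natDegree * g :=
        mul_dvd_mul hw3 (EuclideanDomain.gcd_dvd_right p g)
      rw [← pow_succ] at h1
      exact h1.trans (pow_dvd_pow g (by omega))


open Polynomial

lemma clear_denoms (D : Type*) [CommRing D] [IsDomain D] (K : Type*) [Field K] [Algebra D K]
    [IsFractionRing D K] (h : K[X]) :
    ∃ (c : D) (h' : D[X]), c ≠ 0 ∧ h'.map (algebraMap D K) = C (algebraMap D K c) * h := by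
  obtain ⟨b, hb⟩ := IsLocalization.integerNormalization_map_to_map (nonZeroDivisors D) h
  refine ⟨b, IsLocalization.integerNormalization (nonZeroDivisors D) h, nonZeroDivisors.ne_zero b.2, ?_⟩
  rw [hb, ← algebraMap_smul K (b : D) h, Polynomial.smul_eq_C_mul]

variable {D : Type*} [CommRing D] [IsDomain D]

/-- In `Frac(D)[X]`, `pX` does not divide any power of `g` when `g ∉ I` (`I` prime,
`pX ∈ I`, `I ∩ D = 0`). -/
lemma no_pow_dvd (I : Ideal (Polynomial D)) (hIp : I.IsPrime)
    (hI0 : I.comap (Polynomial.C : D →+* D[X]) = ⊥)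
    (pX : D[X]) (hpXI : pX ∈ I) (g : D[X]) (hg : g ∉ I) (m : ℕ) :
    ¬ ((pX.map (algebraMap D (FractionRing D))) ∣ (g.map (algebraMap D (FractionRing D))) ^ m) := by
  rintro ⟨h, hh⟩
  have hKinj : Function.Injective (algebraMap D (FractionRing D)) :=
    IsFractionRing.injective D (FractionRing D)
  have hmapinj : Function.Injective (Polynomial.map (algebraMap D (FractionRing D))) :=
    Polynomial.map_injective _ hKinj
  obtain ⟨c, h', hc0, hch⟩ := clear_denoms D (FractionRing D) h
  have he : (Polynomial.C c * g ^ m).map (algebraMap D (FractionRing D)) =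
      (h' * pX).map (algebraMap D (FractionRing D)) := by
    rw [Polynomial.map_mul, Polynomial.map_pow, Polynomial.map_C, Polynomial.map_mul, hch, hh]
    ring
  have he2 : Polynomial.C c * g ^ m = h' * pX := hmapinj he
  have hmem : Polynomial.C c * g ^ m ∈ I := he2 ▸ I.mul_mem_left h' hpXI
  rcases hIp.mem_or_mem hmem with hcm | hgm
  · have h3 : c ∈ I.comap (Polynomial.C : D →+* D[X]) := hcm
    rw [hI0] at h3
    exact hc0 (by simpa using h3)
  · exact hg (hIp.mem_of_pow_mem m hgm)

/-- Division with remainder against the minimal-degree element of `I`. -/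
lemma remainder_drop (I : Ideal (Polynomial D))
    (pX : D[X]) (hpXI : pX ∈ I) (hpX0 : pX ≠ 0)
    (hmin : ∀ r, r ∈ I → r.natDegree < pX.natDegree → r = 0)
    (h : D[X]) (hhI : h ∈ I) :
    ∃ (c : D) (Qh : D[X]), c ≠ 0 ∧ Polynomial.C c * h = Qh * pX := by
  have hKinj : Function.Injective (algebraMap D (FractionRing D)) :=
    IsFractionRing.injective D (FractionRing D)
  have hmapinj : Function.Injective (Polynomial.map (algebraMap D (FractionRing D))) :=
    Polynomial.map_injective _ hKinj
  have hpK0 : pX.map (algebraMap D (FractionRing D)) ≠ 0 :=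
    fun h0 => hpX0 (hmapinj (by rw [h0, Polynomial.map_zero]))
  have hmonic : Monic (pX.map (algebraMap D (FractionRing D)) *
      C (pX.map (algebraMap D (FractionRing D))).leadingCoeff⁻¹) :=
    monic_mul_leadingCoeff_inv hpK0
  set pK := pX.map (algebraMap D (FractionRing D)) with hpKdef
  set hKp := h.map (algebraMap D (FractionRing D)) with hhKp
  set P1 := pK * C pK.leadingCoeff⁻¹ with hP1
  have hdiv := modByMonic_add_div hKp P1
  obtain ⟨cQ, Qt, hcQ0, hQt⟩ := clear_denoms D (FractionRing D) (C pK.leadingCoeff⁻¹ * (hKp /ₘ P1))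
  have hQcomp : (Qt * pX).map (algebraMap D (FractionRing D)) =
      Polynomial.C (algebraMap D (FractionRing D) cQ) * (P1 * (hKp /ₘ P1)) := by
    rw [Polynomial.map_mul, hQt, hP1]
    ring
  by_cases hrho : hKp %ₘ P1 = 0
  · refine ⟨cQ, Qt, hcQ0, ?_⟩
    apply hmapinj
    rw [hrho, zero_add] at hdiv
    rw [Polynomial.map_mul, Polynomial.map_C, hQcomp, hdiv, ← hhKp]
  · exfalso
    have hrI : Polynomial.C cQ * h - Qt * pX ∈ I :=
      I.sub_mem (I.mul_mem_left _ hhI) (I.mul_mem_left Qt hpXI)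
    have hrmap : (Polynomial.C cQ * h - Qt * pX).map (algebraMap D (FractionRing D)) =
        Polynomial.C (algebraMap D (FractionRing D) cQ) * (hKp %ₘ P1) := by
      rw [Polynomial.map_sub, Polynomial.map_mul, Polynomial.map_C, hQcomp, ← hhKp,
        eq_sub_of_add_eq hdiv]
      ring
    have hCcQ : algebraMap D (FractionRing D) cQ ≠ 0 :=
      fun h0 => hcQ0 (hKinj (by rw [h0, map_zero]))
    have hr0 : Polynomial.C cQ * h - Qt * pX ≠ 0 := by
      intro h0
      apply hrho
      have h1 : Polynomial.C (algebraMap D (FractionRing D) cQ) * (hKp %ₘ P1) = 0 := by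
        rw [← hrmap, h0, Polynomial.map_zero]
      rcases mul_eq_zero.mp h1 with h2 | h2
      · exact absurd (Polynomial.C_eq_zero.mp h2) hCcQ
      · exact h2
    have hrdeg : (Polynomial.C cQ * h - Qt * pX).natDegree < pX.natDegree := by
      have h1 : ((Polynomial.C cQ * h - Qt * pX).map (algebraMap D (FractionRing D))).natDegree
          = (Polynomial.C cQ * h - Qt * pX).natDegree :=
        natDegree_map_eq_of_injective hKinj _
      have h2 : (Polynomial.C (algebraMap D (FractionRing D) cQ) * (hKp %ₘ P1)).natDegree
          = (hKp %ₘ P1).natDegree := by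
        rw [natDegree_C_mul hCcQ]
      have h3 : (hKp %ₘ P1).degree < P1.degree := degree_modByMonic_lt hKp hmonic
      have h4 : (hKp %ₘ P1).natDegree < P1.natDegree := natDegree_lt_natDegree hrho h3
      have h5 : P1.natDegree = pK.natDegree := by
        rw [hP1, natDegree_mul hpK0 (Polynomial.C_ne_zero.mpr
          (inv_ne_zero (leadingCoeff_ne_zero.mpr hpK0))), natDegree_C, add_zero]
      have h6 : pK.natDegree = pX.natDegree := natDegree_map_eq_of_injective hKinj pX
      rw [← h1, hrmap, h2]
      omega
    exact hr0 (hmin _ hrI hrdeg)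

/-- Package of certified data over `D` witnessing a nontrivial factor of `pX`
coprime to `g` over the fraction field. -/
lemma coprime_package (pX g : D[X]) (hpX0 : pX ≠ 0) (hg0 : g ≠ 0)
    (hpow : ∀ m : ℕ, ¬ ((pX.map (algebraMap D (FractionRing D))) ∣
      (g.map (algebraMap D (FractionRing D))) ^ m)) :
    ∃ (c1 c2 : D) (ut wt a' b' : D[X]), c1 ≠ 0 ∧ c2 ≠ 0 ∧ 1 ≤ ut.natDegree ∧
      Polynomial.C c1 * pX = ut * wt ∧ a' * ut + b' * g = Polynomial.C c2 := by
  classical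
  have hKinj : Function.Injective (algebraMap D (FractionRing D)) :=
    IsFractionRing.injective D (FractionRing D)
  have hmapinj : Function.Injective (Polynomial.map (algebraMap D (FractionRing D))) :=
    Polynomial.map_injective _ hKinj
  have hpK0 : pX.map (algebraMap D (FractionRing D)) ≠ 0 :=
    fun h0 => hpX0 (hmapinj (by rw [h0, Polynomial.map_zero]))
  have hgK0 : g.map (algebraMap D (FractionRing D)) ≠ 0 :=
    fun h0 => hg0 (hmapinj (by rw [h0, Polynomial.map_zero]))
  obtain ⟨u, w, huw, hcop, hwdvd⟩ := exists_coprime_factor (g.map (algebraMap D (FractionRing D)))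
    hgK0 (pX.map (algebraMap D (FractionRing D))).natDegree
    (pX.map (algebraMap D (FractionRing D))) hpK0 le_rfl
  have hu0 : u ≠ 0 := fun h => hpK0 (by rw [huw, h, zero_mul])
  have hunotunit : ¬ IsUnit u := by
    intro hu
    apply hpow (pX.map (algebraMap D (FractionRing D))).natDegree
    obtain ⟨v, hv⟩ := hu
    obtain ⟨z0, hz0⟩ := hwdvd
    refine ⟨(↑v⁻¹ : (FractionRing D)[X]) * z0, ?_⟩
    rw [hz0, huw, ← hv]
    rw [show (↑v : (FractionRing D)[X]) * w * ((↑v⁻¹ : (FractionRing D)[X]) * z0)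
        = ((↑v : (FractionRing D)[X]) * (↑v⁻¹ : (FractionRing D)[X])) * (w * z0) from by ring,
      Units.mul_inv, one_mul]
  obtain ⟨α, β, hbez⟩ := hcop
  obtain ⟨cu, ut, hcu0, hut⟩ := clear_denoms D (FractionRing D) u
  obtain ⟨cw, wt, hcw0, hwt⟩ := clear_denoms D (FractionRing D) w
  obtain ⟨ca, at', hca0, hat⟩ := clear_denoms D (FractionRing D) α
  obtain ⟨cb, bt, hcb0, hbt⟩ := clear_denoms D (FractionRing D) β
  have hCcu : algebraMap D (FractionRing D) cu ≠ 0 :=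
    fun h0 => hcu0 (hKinj (by rw [h0, map_zero]))
  have hutdeg : 1 ≤ ut.natDegree := by
    have h1 : (ut.map (algebraMap D (FractionRing D))).natDegree = ut.natDegree :=
      natDegree_map_eq_of_injective hKinj ut
    have h2 : (Polynomial.C (algebraMap D (FractionRing D) cu) * u).natDegree = u.natDegree :=
      natDegree_C_mul hCcu
    have hudeg : 1 ≤ u.natDegree := by
      by_contra hcon
      obtain ⟨c, hc⟩ := natDegree_eq_zero.mp (by omega : u.natDegree = 0)
      exact hunotunit (hc ▸ isUnit_C.mpr (isUnit_iff_ne_zero.mpr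
        (fun h0 => hu0 (by rw [← hc, h0, map_zero]))))
    rw [← h1, hut, h2]
    exact hudeg
  refine ⟨cu * cw, ca * cu * cb, ut, wt, at' * Polynomial.C cb, bt * Polynomial.C (ca * cu),
    mul_ne_zero hcu0 hcw0, mul_ne_zero (mul_ne_zero hca0 hcu0) hcb0, hutdeg, ?_, ?_⟩
  · apply hmapinj
    calc (Polynomial.C (cu * cw) * pX).map (algebraMap D (FractionRing D))
        = Polynomial.C (algebraMap D (FractionRing D) cu) *
            Polynomial.C (algebraMap D (FractionRing D) cw) * (u * w) := by
          simp only [Polynomial.map_mul, Polynomial.map_C, map_mul, C_mul, huw]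
      _ = (Polynomial.C (algebraMap D (FractionRing D) cu) * u) *
            (Polynomial.C (algebraMap D (FractionRing D) cw) * w) := by ring
      _ = (ut * wt).map (algebraMap D (FractionRing D)) := by
          rw [Polynomial.map_mul, hut, hwt]
  · apply hmapinj
    calc ((at' * Polynomial.C cb) * ut + (bt * Polynomial.C (ca * cu)) * g).map
          (algebraMap D (FractionRing D))
        = (Polynomial.C (algebraMap D (FractionRing D) ca) * α *
            Polynomial.C (algebraMap D (FractionRing D) cb)) *
            (Polynomial.C (algebraMap D (FractionRing D) cu) * u) +
          (Polynomial.C (algebraMap D (FractionRing D) cb) * β *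
            (Polynomial.C (algebraMap D (FractionRing D) ca) *
             Polynomial.C (algebraMap D (FractionRing D) cu))) *
            g.map (algebraMap D (FractionRing D)) := by
          simp only [Polynomial.map_add, Polynomial.map_mul, Polynomial.map_C, map_mul, C_mul,
            hat, hbt, hut]
          try ring
      _ = Polynomial.C (algebraMap D (FractionRing D) ca) *
            Polynomial.C (algebraMap D (FractionRing D) cu) *
            Polynomial.C (algebraMap D (FractionRing D) cb) *
            (α * u + β * g.map (algebraMap D (FractionRing D))) := by ring
      _ = (Polynomial.C (ca * cu * cb)).map (algebraMap D (FractionRing D)) := by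
          rw [hbez, mul_one]
          simp only [Polynomial.map_mul, Polynomial.map_C, map_mul, C_mul]
          try ring


lemma fiber_lift (P : Ideal D) (hP : P.IsPrime)
    (I : Ideal D[X]) (s : Finset D[X]) (hs : Ideal.span ↑s = I)
    (pX g : D[X])
    (hdropc : ∀ h ∈ s, ∃ (c : D) (Qh : D[X]), c ∉ P ∧ Polynomial.C c * h = Qh * pX)
    (c1 c2 : D) (ut wt a' b' : D[X])
    (hc1P : c1 ∉ P) (hc2P : c2 ∉ P) (hlutP : ut.leadingCoeff ∉ P) (hutdeg : 1 ≤ ut.natDegree)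
    (hE1 : Polynomial.C c1 * pX = ut * wt)
    (hE2 : a' * ut + b' * g = Polynomial.C c2) :
    ∃ Q : Ideal D[X], Q.IsPrime ∧ I ≤ Q ∧ Q.comap (Polynomial.C : D →+* D[X]) = P ∧ g ∉ Q := by
  classical
  haveI := hP
  set ν : D →+* FractionRing (D ⧸ P) :=
    (algebraMap (D ⧸ P) (FractionRing (D ⧸ P))).comp (Ideal.Quotient.mk P) with hνdef
  have hν0 : ∀ d : D, ν d = 0 ↔ d ∈ P := by
    intro d
    rw [hνdef]
    simp only [RingHom.comp_apply]
    constructor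
    · intro h0
      have h1 : algebraMap (D ⧸ P) (FractionRing (D ⧸ P)) (Ideal.Quotient.mk P d) =
          algebraMap (D ⧸ P) (FractionRing (D ⧸ P)) 0 := by rw [h0, map_zero]
      exact Ideal.Quotient.eq_zero_iff_mem.mp
        (IsFractionRing.injective (D ⧸ P) (FractionRing (D ⧸ P)) h1)
    · intro hd
      rw [Ideal.Quotient.eq_zero_iff_mem.mpr hd, map_zero]
  set ψ : D[X] →+* (FractionRing (D ⧸ P))[X] := mapRingHom ν with hψdef
  have hψC : ∀ d : D, ψ (Polynomial.C d) = Polynomial.C (ν d) := fun d => by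
    rw [hψdef, coe_mapRingHom, Polynomial.map_C]
  have hJle : Ideal.map ψ I ≤ Ideal.span {ψ pX} := by
    rw [← hs, Ideal.map_span]
    refine Ideal.span_le.mpr ?_
    rintro x ⟨h, hh, rfl⟩
    rw [SetLike.mem_coe, Ideal.mem_span_singleton]
    obtain ⟨c, Qh, hcP, hch⟩ := hdropc h hh
    have hc : ν c ≠ 0 := fun h0 => hcP ((hν0 c).mp h0)
    have happ : Polynomial.C (ν c) * ψ h = ψ Qh * ψ pX := by
      rw [← hψC, ← map_mul, hch, map_mul]
    refine ⟨Polynomial.C (ν c)⁻¹ * ψ Qh, ?_⟩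
    calc ψ h = (Polynomial.C (ν c)⁻¹ * Polynomial.C (ν c)) * ψ h := by
          rw [← C_mul, inv_mul_cancel₀ hc, C_1, one_mul]
      _ = Polynomial.C (ν c)⁻¹ * (Polynomial.C (ν c) * ψ h) := by ring
      _ = Polynomial.C (ν c)⁻¹ * (ψ Qh * ψ pX) := by rw [happ]
      _ = ψ pX * (Polynomial.C (ν c)⁻¹ * ψ Qh) := by ring
  have hdisj : Disjoint (Ideal.map ψ I : Set ((FractionRing (D ⧸ P))[X]))
      (Submonoid.powers (ψ g) : Set ((FractionRing (D ⧸ P))[X])) := by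
    rw [Set.disjoint_left]
    rintro x hxJ ⟨m, rfl⟩
    have hdvd : ψ pX ∣ ψ g ^ m := Ideal.mem_span_singleton.mp (hJle hxJ)
    have hc2 : ν c2 ≠ 0 := fun h0 => hc2P ((hν0 c2).mp h0)
    have hcop : IsCoprime (ψ ut) (ψ g) := by
      refine ⟨Polynomial.C (ν c2)⁻¹ * ψ a', Polynomial.C (ν c2)⁻¹ * ψ b', ?_⟩
      have h1 : ψ a' * ψ ut + ψ b' * ψ g = Polynomial.C (ν c2) := by
        rw [← map_mul, ← map_mul, ← map_add, hE2, hψC]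
      calc (Polynomial.C (ν c2)⁻¹ * ψ a') * ψ ut + (Polynomial.C (ν c2)⁻¹ * ψ b') * ψ g
          = Polynomial.C (ν c2)⁻¹ * (ψ a' * ψ ut + ψ b' * ψ g) := by ring
        _ = Polynomial.C (ν c2)⁻¹ * Polynomial.C (ν c2) := by rw [h1]
        _ = 1 := by rw [← C_mul, inv_mul_cancel₀ hc2, C_1]
    have hc1 : ν c1 ≠ 0 := fun h0 => hc1P ((hν0 c1).mp h0)
    have hdvdu : ψ ut ∣ ψ g ^ m := by
      have h1 : ψ ut ∣ Polynomial.C (ν c1) * ψ pX := by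
        have h2 : Polynomial.C (ν c1) * ψ pX = ψ ut * ψ wt := by
          rw [← hψC, ← map_mul, hE1, map_mul]
        exact ⟨ψ wt, h2⟩
      obtain ⟨z, hz⟩ := h1.trans (mul_dvd_mul_left _ hdvd)
      refine ⟨Polynomial.C (ν c1)⁻¹ * z, ?_⟩
      calc ψ g ^ m = (Polynomial.C (ν c1)⁻¹ * Polynomial.C (ν c1)) * ψ g ^ m := by
            rw [← C_mul, inv_mul_cancel₀ hc1, C_1, one_mul]
        _ = Polynomial.C (ν c1)⁻¹ * (Polynomial.C (ν c1) * ψ g ^ m) := by ring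
        _ = Polynomial.C (ν c1)⁻¹ * (ψ ut * z) := by rw [hz]
        _ = ψ ut * (Polynomial.C (ν c1)⁻¹ * z) := by ring
    have hunit : IsUnit (ψ ut) := (hcop.pow_right (n := m)).isUnit_of_dvd' dvd_rfl hdvdu
    have hd0 : (ψ ut).natDegree = 0 := natDegree_eq_zero_of_isUnit hunit
    have hlut : ν ut.leadingCoeff ≠ 0 := fun h0 => hlutP ((hν0 _).mp h0)
    have hcoeff : (ψ ut).coeff ut.natDegree ≠ 0 := by
      rw [hψdef, coe_mapRingHom, coeff_map, coeff_natDegree]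
      exact hlut
    have hge := le_natDegree_of_ne_zero hcoeff
    omega
  obtain ⟨Qhat, hQp, hJQ, hQdisj⟩ := Ideal.exists_le_prime_disjoint (Ideal.map ψ I) _ hdisj
  haveI := hQp
  refine ⟨Qhat.comap ψ, Ideal.IsPrime.comap ψ, Ideal.map_le_iff_le_comap.mp hJQ, ?_, ?_⟩
  · ext d
    simp only [Ideal.mem_comap, hψC]
    constructor
    · intro hd
      by_contra hdP
      have hu : IsUnit (Polynomial.C (ν d)) :=
        isUnit_C.mpr (isUnit_iff_ne_zero.mpr (fun h0 => hdP ((hν0 d).mp h0)))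
      exact hQp.ne_top (Ideal.eq_top_of_isUnit_mem _ hd hu)
    · intro hd
      rw [(hν0 d).mpr hd, C_0]
      exact Qhat.zero_mem
  · intro hgQ
    rw [Ideal.mem_comap] at hgQ
    exact Set.disjoint_left.mp hQdisj hgQ ⟨1, pow_one _⟩

theorem step_lemma [IsNoetherianRing D]
    (I : Ideal (Polynomial D)) (hIp : I.IsPrime)
    (hI0 : I.comap (Polynomial.C : D →+* D[X]) = ⊥)
    (g : D[X]) (hg : g ∉ I) :
    ∃ f : D, f ≠ 0 ∧ ∀ P : Ideal D, P.IsPrime → f ∉ P →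
      ∃ Q : Ideal D[X], Q.IsPrime ∧ I ≤ Q ∧ Q.comap (Polynomial.C : D →+* D[X]) = P ∧ g ∉ Q := by
  classical
  have hg0 : g ≠ 0 := fun h => hg (h ▸ I.zero_mem)
  by_cases hIbot : I = ⊥
  · refine ⟨g.leadingCoeff, leadingCoeff_ne_zero.mpr hg0, ?_⟩
    intro P hP hfP
    haveI := hP
    set ψ := Polynomial.mapRingHom (Ideal.Quotient.mk P) with hψdef
    refine ⟨RingHom.ker ψ, RingHom.ker_isPrime ψ, hIbot ▸ bot_le, ?_, ?_⟩
    · ext d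
      simp only [Ideal.mem_comap, RingHom.mem_ker, hψdef, coe_mapRingHom, map_C, C_eq_zero,
        Ideal.Quotient.eq_zero_iff_mem]
    · intro hker
      rw [RingHom.mem_ker] at hker
      apply hfP
      have h2 := congrArg (fun r => r.coeff g.natDegree) hker
      simp only [hψdef, coe_mapRingHom, coeff_map, coeff_zero, coeff_natDegree] at h2
      exact Ideal.Quotient.eq_zero_iff_mem.mp h2
  · obtain ⟨p0, hp0I, hp00⟩ := Submodule.ne_bot_iff I |>.mp hIbot
    have hex : ∃ n : ℕ, ∃ p, p ∈ I ∧ p ≠ 0 ∧ p.natDegree = n :=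
      ⟨p0.natDegree, p0, hp0I, hp00, rfl⟩
    obtain ⟨pX, hpXI, hpX0, hpXdeg⟩ := Nat.find_spec hex
    have hmin : ∀ r, r ∈ I → r.natDegree < pX.natDegree → r = 0 := by
      intro r hrI hrd
      by_contra hr0
      have h1 := Nat.find_min' hex ⟨r, hrI, hr0, rfl⟩
      omega
    have hpow := no_pow_dvd I hIp hI0 pX hpXI g hg
    obtain ⟨c1, c2, ut, wt, a', b', hc10, hc20, hutdeg, hE1, hE2⟩ :=
      coprime_package pX g hpX0 hg0 hpow
    obtain ⟨s, hs⟩ := (IsNoetherian.noetherian I : I.FG)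
    have hgen : ∀ h : {x // x ∈ s}, ∃ (c : D) (Qh : D[X]), c ≠ 0 ∧ Polynomial.C c * ↑h = Qh * pX :=
      fun h => remainder_drop I pX hpXI hpX0 hmin ↑h (hs ▸ Ideal.subset_span h.2)
    choose cfun Qfun hcfun hQfun using hgen
    have hut0 : ut ≠ 0 := by
      intro h0; rw [h0] at hutdeg; simp at hutdeg
    refine ⟨c1 * c2 * ut.leadingCoeff * ∏ h ∈ s.attach, cfun h, ?_, ?_⟩
    · refine mul_ne_zero (mul_ne_zero (mul_ne_zero hc10 hc20)
        (leadingCoeff_ne_zero.mpr hut0)) ?_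
      rw [Finset.prod_ne_zero_iff]
      exact fun h _ => hcfun h
    intro P hP hfP
    have hsplit : ∀ x y : D, x * y ∉ P → x ∉ P ∧ y ∉ P := by
      intro x y hxy
      exact ⟨fun hx => hxy (Ideal.mul_mem_right y P hx), fun hy => hxy (Ideal.mul_mem_left P x hy)⟩
    obtain ⟨h123, hprodP⟩ := hsplit _ _ hfP
    obtain ⟨h12, hlutP⟩ := hsplit _ _ h123
    obtain ⟨hc1P, hc2P⟩ := hsplit _ _ h12
    have hdropc : ∀ h ∈ s, ∃ (c : D) (Qh : D[X]), c ∉ P ∧ Polynomial.C c * h = Qh * pX := by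
      intro h hh
      refine ⟨cfun ⟨h, hh⟩, Qfun ⟨h, hh⟩, ?_, hQfun ⟨h, hh⟩⟩
      intro hmem
      apply hprodP
      obtain ⟨z, hz⟩ := Finset.dvd_prod_of_mem cfun (Finset.mem_attach s ⟨h, hh⟩)
      rw [hz]
      exact Ideal.mul_mem_right z P hmem
    exact fiber_lift P hP I s hs pX g hdropc c1 c2 ut wt a' b' hc1P hc2P hlutP hutdeg hE1 hE2


section Chain

variable {B : Type*} [CommRing B] [IsDomain B]

/-- The subring obtained by adjoining one element. -/
def clo (D0 : Subring B) (x : B) : Subring B := Subring.closure (↑D0 ∪ {x})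

lemma le_clo (D0 : Subring B) (x : B) : D0 ≤ clo D0 x :=
  fun _ hy => Subring.subset_closure (Set.mem_union_left _ hy)

lemma x_mem_clo (D0 : Subring B) (x : B) : x ∈ clo D0 x :=
  Subring.subset_closure (Set.mem_union_right _ rfl)

noncomputable def evh (D0 : Subring B) (x : B) : (Polynomial ↥D0) →+* ↥(clo D0 x) :=
  Polynomial.eval₂RingHom (Subring.inclusion (le_clo D0 x)) ⟨x, x_mem_clo D0 x⟩

lemma evh_C (D0 : Subring B) (x : B) (c : ↥D0) :
    evh D0 x (Polynomial.C c) = Subring.inclusion (le_clo D0 x) c := by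
  simp [evh, Polynomial.eval₂_C]

lemma evh_surj (D0 : Subring B) (x : B) : Function.Surjective (evh D0 x) := by
  intro y
  have hle : Subring.closure (↑D0 ∪ {x}) ≤ (RingHom.range (evh D0 x)).map (clo D0 x).subtype := by
    apply Subring.closure_le.mpr
    rintro z (hz | hz)
    · refine ⟨Subring.inclusion (le_clo D0 x) ⟨z, hz⟩, ⟨Polynomial.C ⟨z, hz⟩, (evh_C D0 x _)⟩, rfl⟩
    · rw [Set.mem_singleton_iff] at hz
      subst hz
      exact ⟨⟨z, x_mem_clo D0 z⟩, ⟨Polynomial.X, by simp [evh, Polynomial.eval₂_X]⟩, rfl⟩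
  obtain ⟨w, hw1, hw2⟩ := hle y.2
  obtain ⟨p, hp⟩ := hw1
  exact ⟨p, by rw [hp]; exact Subtype.ext hw2⟩

lemma clo_noetherian (D0 : Subring B) (hN : IsNoetherianRing ↥D0) (x : B) :
    IsNoetherianRing ↥(clo D0 x) :=
  isNoetherianRing_of_surjective (Polynomial ↥D0) ↥(clo D0 x) (evh D0 x) (evh_surj D0 x)

lemma one_step (D0 : Subring B) (hN : IsNoetherianRing ↥D0) (x : B)
    (g1 : ↥(clo D0 x)) (hg1 : g1 ≠ 0) :
    ∃ f : ↥D0, f ≠ 0 ∧ ∀ P : Ideal ↥D0, P.IsPrime → f ∉ P →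
      ∃ P1 : Ideal ↥(clo D0 x), P1.IsPrime ∧
        P1.comap (Subring.inclusion (le_clo D0 x)) = P ∧ g1 ∉ P1 := by
  classical
  have hsurj := evh_surj D0 x
  have hIp : (RingHom.ker (evh D0 x)).IsPrime := RingHom.ker_isPrime _
  have hI0 : (RingHom.ker (evh D0 x)).comap (Polynomial.C : ↥D0 →+* (↥D0)[X]) = ⊥ := by
    ext c
    simp only [Ideal.mem_comap, RingHom.mem_ker, Ideal.mem_bot]
    constructor
    · intro h0
      rw [evh_C] at h0
      exact Subtype.ext (congrArg Subtype.val h0 : (c : B) = 0)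
    · rintro rfl
      rw [map_zero, map_zero]
  obtain ⟨gh, hgh⟩ := hsurj g1
  have hghI : gh ∉ RingHom.ker (evh D0 x) := by
    rw [RingHom.mem_ker, hgh]
    exact hg1
  obtain ⟨f, hf0, hfP⟩ := step_lemma (RingHom.ker (evh D0 x)) hIp hI0 gh hghI
  refine ⟨f, hf0, ?_⟩
  intro P hP hfnP
  obtain ⟨Q, hQp, hIQ, hQC, hghQ⟩ := hfP P hP hfnP
  have hcm : (Q.map (evh D0 x)).comap (evh D0 x) = Q := by
    rw [Ideal.comap_map_of_surjective _ hsurj]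
    refine le_antisymm (sup_le le_rfl ?_) le_sup_left
    intro a ha
    exact hIQ (RingHom.mem_ker.mpr (Ideal.mem_bot.mp (Ideal.mem_comap.mp ha)))
  haveI := hQp
  refine ⟨Q.map (evh D0 x), Ideal.map_isPrime_of_surjective hsurj hIQ, ?_, ?_⟩
  · ext c
    simp only [Ideal.mem_comap]
    rw [← evh_C D0 x c, ← Ideal.mem_comap, hcm, ← hQC, Ideal.mem_comap]
  · intro hgm
    have h1 : gh ∈ (Q.map (evh D0 x)).comap (evh D0 x) := by
      rw [Ideal.mem_comap, hgh]
      exact hgm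
    rw [hcm] at h1
    exact hghQ h1

/-- Iterated one-element adjunction. -/
def itClo : (n : ℕ) → Subring B → (Fin n → B) → Subring B
  | 0, D0, _ => D0
  | n + 1, D0, xs => itClo n (clo D0 (xs 0)) (fun i => xs i.succ)

lemma le_itClo : ∀ (n : ℕ) (D0 : Subring B) (xs : Fin n → B), D0 ≤ itClo n D0 xs := by
  intro n
  induction n with
  | zero => intro D0 xs; exact le_rfl
  | succ n ih => intro D0 xs; exact (le_clo D0 (xs 0)).trans (ih (clo D0 (xs 0)) _)

lemma mem_itClo : ∀ (n : ℕ) (D0 : Subring B) (xs : Fin n → B) (i : Fin n), xs i ∈ itClo n D0 xs := by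
  intro n
  induction n with
  | zero => intro D0 xs i; exact absurd i.2 (by omega)
  | succ n ih =>
    intro D0 xs i
    rcases Fin.eq_zero_or_eq_succ i with h0 | ⟨j, rfl⟩
    · rw [h0]
      exact le_itClo n (clo D0 (xs 0)) _ (x_mem_clo D0 (xs 0))
    · exact ih (clo D0 (xs 0)) (fun i => xs i.succ) j

lemma itClo_noetherian : ∀ (n : ℕ) (D0 : Subring B), IsNoetherianRing ↥D0 →
    ∀ (xs : Fin n → B), IsNoetherianRing ↥(itClo n D0 xs) := by
  intro n
  induction n with
  | zero => intro D0 hN xs; exact hN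
  | succ n ih => intro D0 hN xs; exact ih (clo D0 (xs 0)) (clo_noetherian D0 hN (xs 0)) _

lemma chain_lift : ∀ (n : ℕ) (D0 : Subring B), IsNoetherianRing ↥D0 →
    ∀ (xs : Fin n → B) (g : ↥(itClo n D0 xs)), g ≠ 0 →
    ∃ f : ↥D0, f ≠ 0 ∧ ∀ P : Ideal ↥D0, P.IsPrime → f ∉ P →
      ∃ Q : Ideal ↥(itClo n D0 xs), Q.IsPrime ∧
        Q.comap (Subring.inclusion (le_itClo n D0 xs)) = P ∧ g ∉ Q := by
  intro n
  induction n with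
  | zero =>
    intro D0 hN xs g hg
    refine ⟨g, hg, ?_⟩
    intro P hP hfP
    refine ⟨P, hP, ?_, hfP⟩
    ext c
    refine Ideal.mem_comap.trans ?_
    have hc : (Subring.inclusion (le_itClo 0 D0 xs)) c = c := Subtype.ext rfl
    rw [hc]
    exact Iff.rfl
  | succ n ih =>
    intro D0 hN xs g hg
    obtain ⟨f1, hf10, hlift1⟩ := ih (clo D0 (xs 0)) (clo_noetherian D0 hN (xs 0))
      (fun i : Fin n => xs i.succ) g hg
    obtain ⟨f, hf0, hlift0⟩ := one_step D0 hN (xs 0) f1 hf10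
    refine ⟨f, hf0, ?_⟩
    intro P hP hfP
    obtain ⟨P1, hP1p, hP1c, hf1P1⟩ := hlift0 P hP hfP
    obtain ⟨Q1, hQ1p, hQ1c, hgQ1⟩ := hlift1 P1 hP1p hf1P1
    refine ⟨Q1, hQ1p, ?_, hgQ1⟩
    ext c
    refine Ideal.mem_comap.trans ?_
    have hc : (Subring.inclusion (le_itClo (n + 1) D0 xs)) c
        = (Subring.inclusion (le_itClo n (clo D0 (xs 0)) (fun i : Fin n => xs i.succ)))
          (Subring.inclusion (le_clo D0 (xs 0)) c) := Subtype.ext rfl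
    rw [hc]
    constructor
    · intro h1
      have h2 : Subring.inclusion (le_clo D0 (xs 0)) c ∈ Q1.comap
          (Subring.inclusion (le_itClo n (clo D0 (xs 0)) (fun i : Fin n => xs i.succ))) :=
        Ideal.mem_comap.mpr h1
      rw [hQ1c] at h2
      have h3 : c ∈ P1.comap (Subring.inclusion (le_clo D0 (xs 0))) := Ideal.mem_comap.mpr h2
      rw [hP1c] at h3
      exact h3
    · intro h1
      have h3 : c ∈ P1.comap (Subring.inclusion (le_clo D0 (xs 0))) := by
        rw [hP1c]; exact h1
      have h2 := Ideal.mem_comap.mp h3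
      have h4 : Subring.inclusion (le_clo D0 (xs 0)) c ∈ Q1.comap
          (Subring.inclusion (le_itClo n (clo D0 (xs 0)) (fun i : Fin n => xs i.succ))) := by
        rw [hQ1c]; exact h2
      exact Ideal.mem_comap.mp h4

end Chain


theorem units_imply_algebraic {L R : Type*} [Field L] [CommRing R] [Nontrivial R] [Algebra L R]
    (hfg : Algebra.FiniteType L R) (b : R) (Lam : Set L) (hLam : Lam.Infinite)
    (hunits : ∀ l ∈ Lam, IsUnit (b - algebraMap L R l)) :
    IsAlgebraic L b := by
  classical
  by_contra htrans
  have htr : ∀ p : Polynomial L, p ≠ 0 → Polynomial.aeval b p ≠ 0 := by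
    intro p hp0 hp
    exact htrans ⟨p, hp0, hp⟩
  let T : Submonoid R :=
    { carrier := {r | ∃ p : Polynomial L, p ≠ 0 ∧ Polynomial.aeval b p = r}
      one_mem' := ⟨1, one_ne_zero, map_one _⟩
      mul_mem' := fun {x y} hx hy => by
        obtain ⟨p, hp0, hp⟩ := hx
        obtain ⟨q, hq0, hq⟩ := hy
        exact ⟨p * q, mul_ne_zero hp0 hq0, by rw [map_mul, hp, hq]⟩ }
  have hdisj : Disjoint ((⊥ : Ideal R) : Set R) (T : Set R) := by
    rw [Set.disjoint_left]
    rintro x hx ⟨p, hp0, hp⟩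
    rw [SetLike.mem_coe, Ideal.mem_bot] at hx
    exact htr p hp0 (by rw [hp, hx])
  obtain ⟨Pr, hPrp, _, hPrdisj⟩ := Ideal.exists_le_prime_disjoint ⊥ T hdisj
  haveI := hPrp
  let π := Ideal.Quotient.mkₐ L Pr
  let b' : R ⧸ Pr := π b
  have htr' : ∀ p : Polynomial L, p ≠ 0 → Polynomial.aeval b' p ≠ 0 := by
    intro p hp0 hp
    rw [Polynomial.aeval_algHom_apply] at hp
    have hmem : Polynomial.aeval b p ∈ Pr := by
      rwa [Ideal.Quotient.mkₐ_eq_mk, Ideal.Quotient.eq_zero_iff_mem] at hp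
    exact Set.disjoint_left.mp hPrdisj hmem ⟨p, hp0, rfl⟩
  have hunits' : ∀ l ∈ Lam, IsUnit (b' - algebraMap L (R ⧸ Pr) l) := by
    intro l hl
    have h1 : (algebraMap L (R ⧸ Pr) l) = π (algebraMap L R l) := (π.commutes l).symm
    rw [h1, ← map_sub]
    exact (hunits l hl).map π
  let ev : Polynomial L →ₐ[L] R ⧸ Pr := Polynomial.aeval b'
  have hevinj : Function.Injective ev := by
    intro p q hpq
    by_contra hne
    exact htr' (p - q) (sub_ne_zero.mpr hne) (by rw [map_sub, hpq, sub_self])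
  let D0 : Subring (R ⧸ Pr) := (ev : Polynomial L →+* R ⧸ Pr).range
  have hNoeth : IsNoetherianRing ↥D0 :=
    isNoetherianRing_of_surjective (Polynomial L) ↥D0
      (ev : Polynomial L →+* R ⧸ Pr).rangeRestrict (RingHom.rangeRestrict_surjective _)
  have hfg' : Algebra.FiniteType L (R ⧸ Pr) :=
    by haveI := hfg; exact Algebra.FiniteType.of_surjective π (Ideal.Quotient.mkₐ_surjective L Pr)
  obtain ⟨s, hsadj⟩ := hfg'.out
  let xs : Fin s.card → R ⧸ Pr := fun i => ((s.equivFin.symm i : {x // x ∈ s}) : R ⧸ Pr)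
  have htop : itClo s.card D0 xs = ⊤ := by
    rw [eq_top_iff]
    have h1 : Subring.closure (Set.range (algebraMap L (R ⧸ Pr)) ∪ ↑s) = ⊤ := by
      rw [← Algebra.adjoin_eq_ring_closure, hsadj]
      rfl
    rw [← h1]
    apply Subring.closure_le.mpr
    rintro z (⟨a, rfl⟩ | hz)
    · refine le_itClo _ D0 xs ⟨Polynomial.C a, ?_⟩
      simp [ev]
    · have hz2 : z = xs (s.equivFin ⟨z, hz⟩) := by simp [xs]
      rw [hz2]
      exact mem_itClo _ D0 xs _
  obtain ⟨f, hf0, hlift⟩ := chain_lift s.card D0 hNoeth xs 1 one_ne_zero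
  obtain ⟨F, hF⟩ := f.2
  have hF0 : F ≠ 0 := by
    rintro rfl
    apply hf0
    apply Subtype.ext
    rw [← hF]
    simp
  have hroots : Set.Finite {l : L | Polynomial.IsRoot F l} := Polynomial.finite_setOf_isRoot hF0
  have hexl : ∃ l ∈ Lam, ¬ Polynomial.IsRoot F l := by
    by_contra hcon
    push_neg at hcon
    exact hLam (hroots.subset (fun l hl => hcon l hl))
  obtain ⟨l, hlLam, hlroot⟩ := hexl
  let ι : Polynomial L →+* ↥D0 := (ev : Polynomial L →+* R ⧸ Pr).rangeRestrict
  have hιinj : Function.Injective ι := fun p q h => hevinj (congrArg Subtype.val h)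
  let e0 : Polynomial L ≃+* ↥D0 :=
    RingEquiv.ofBijective ι ⟨hιinj, RingHom.rangeRestrict_surjective _⟩
  let χ : ↥D0 →+* L := (Polynomial.evalRingHom l).comp (e0.symm : ↥D0 →+* Polynomial L)
  have hPp : (RingHom.ker χ).IsPrime := RingHom.ker_isPrime χ
  have he0F : e0 F = f := Subtype.ext hF
  have hfnP : f ∉ RingHom.ker χ := by
    intro hf
    rw [RingHom.mem_ker] at hf
    have hsy : e0.symm f = F := by rw [← he0F, RingEquiv.symm_apply_apply]
    apply hlroot
    have : χ f = Polynomial.eval l F := by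
      show (Polynomial.evalRingHom l) (e0.symm f) = _
      rw [hsy]
      rfl
    rw [this] at hf
    exact hf
  obtain ⟨Q, hQp, hQc, _⟩ := hlift (RingHom.ker χ) hPp hfnP
  haveI := hQp
  let τ : (R ⧸ Pr) →+* ↥(itClo s.card D0 xs) :=
    { toFun := fun z => ⟨z, htop.symm ▸ Subring.mem_top z⟩
      map_one' := Subtype.ext rfl
      map_mul' := fun _ _ => Subtype.ext rfl
      map_zero' := Subtype.ext rfl
      map_add' := fun _ _ => Subtype.ext rfl }
  have hQrp : (Q.comap τ).IsPrime := Ideal.IsPrime.comap τ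
  have hmemQ : b' - algebraMap L (R ⧸ Pr) l ∈ Q.comap τ := by
    rw [Ideal.mem_comap]
    have hval : ((Subring.inclusion (le_itClo s.card D0 xs))
        (ι (Polynomial.X - Polynomial.C l)) : R ⧸ Pr) = b' - algebraMap L (R ⧸ Pr) l := by
      show ev (Polynomial.X - Polynomial.C l) = _
      rw [map_sub]
      simp [ev]
    have hτ : τ (b' - algebraMap L (R ⧸ Pr) l)
        = (Subring.inclusion (le_itClo s.card D0 xs)) (ι (Polynomial.X - Polynomial.C l)) :=
      Subtype.ext hval.symm
    rw [hτ]
    have hP2 : ι (Polynomial.X - Polynomial.C l) ∈ RingHom.ker χ := by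
      rw [RingHom.mem_ker]
      have hap : e0 (Polynomial.X - Polynomial.C l) = ι (Polynomial.X - Polynomial.C l) := rfl
      show (Polynomial.evalRingHom l) (e0.symm (ι (Polynomial.X - Polynomial.C l))) = 0
      rw [← hap, RingEquiv.symm_apply_apply]
      simp
    rw [← hQc] at hP2
    exact Ideal.mem_comap.mp hP2
  exact hQrp.ne_top (Ideal.eq_top_of_isUnit_mem _ hmemQ (hunits' l hlLam))

end GLAux

/-- Let `L` be an iterative `q`-difference field whose field of constants is an
algebraically closed field `C`, and let `R` be a simple iterative `q`-difference
ring over `L` (no nonzero proper ideal stable under all `δ^{(k)}`), finitely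
generated as an `L`-algebra.  Then `R` is reduced, and the constants of its
total ring of fractions `E = Loc(R)` (for any iterative `q`-difference structure
on `E` extending that of `R`) coincide with the constants `C(L)` of `L`. -/
theorem simple_IDq_ring_reduced_and_constants {C L R : Type*} [Field C]
    [IsAlgClosed C] [Field L] [Algebra C L] [CommRing R] [Algebra L R]
    (q t : L) (D_L : IDqRing L q t)
    (D_R : IDqRing R (algebraMap L R q) (algebraMap L R t))
    (hσ : ∀ a : L, D_R.σ (algebraMap L R a) = algebraMap L R (D_L.σ a))
    (hδ : ∀ (k : ℕ) (a : L), D_R.δ k (algebraMap L R a) = algebraMap L R (D_L.δ k a))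
    (hconst : ∀ a : L, (∀ k : ℕ, 0 < k → D_L.δ k a = 0) ↔ a ∈ (algebraMap C L).range)
    (hsimple : ∀ I : Ideal R, (∀ k : ℕ, ∀ a ∈ I, D_R.δ k a ∈ I) → I = ⊥ ∨ I = ⊤)
    (hfg : Algebra.FiniteType L R) :
    IsReduced R ∧
    ∀ (D_E : IDqRing (FractionRing R)
        (algebraMap R (FractionRing R) (algebraMap L R q))
        (algebraMap R (FractionRing R) (algebraMap L R t))),
      (∀ (k : ℕ) (a : R),
        D_E.δ k (algebraMap R (FractionRing R) a) = algebraMap R (FractionRing R) (D_R.δ k a)) →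
      ∀ x : FractionRing R, (∀ k : ℕ, 0 < k → D_E.δ k x = 0) →
        ∃ c : L, (∀ k : ℕ, 0 < k → D_L.δ k c = 0) ∧
          x = algebraMap R (FractionRing R) (algebraMap L R c) := by

  classical
  refine ⟨IDqRingAux.reduced_of_simple D_R hsimple, ?_⟩
  intro D_E hδE x hx
  rcases subsingleton_or_nontrivial R with hsub | hnt
  · refine ⟨0, fun k _ => map_zero _, ?_⟩
    have h10 : (0 : FractionRing R) = 1 := by
      calc (0 : FractionRing R) = algebraMap R _ 0 := (map_zero _).symm
        _ = algebraMap R _ 1 := by rw [Subsingleton.elim (0 : R) 1]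
        _ = 1 := map_one _
    haveI : Subsingleton (FractionRing R) := subsingleton_of_zero_eq_one h10
    exact Subsingleton.elim _ _
  haveI := hnt
  -- Step (a): pull x back into R
  let φ := algebraMap R (FractionRing R)
  let I : Ideal R :=
    { carrier := {a | ∃ b : R, φ a * x = φ b}
      add_mem' := fun {a1 a2} h1 h2 => by
        obtain ⟨b1, hb1⟩ := h1
        obtain ⟨b2, hb2⟩ := h2
        exact ⟨b1 + b2, by rw [map_add, map_add, add_mul, hb1, hb2]⟩
      zero_mem' := ⟨0, by rw [map_zero, zero_mul]⟩
      smul_mem' := fun r a ha => by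
        obtain ⟨b, hb⟩ := ha
        exact ⟨r * b, by rw [smul_eq_mul, map_mul, map_mul, mul_assoc, hb]⟩ }
  have hstab : ∀ k : ℕ, ∀ a ∈ I, D_R.δ k a ∈ I := by
    intro k a ha
    obtain ⟨b, hb⟩ := ha
    have h1 := D_E.leibniz k (φ a) x
    have h2 : ∑ ij ∈ Finset.HasAntidiagonal.antidiagonal k, (⇑D_E.σ)^[ij.1] (D_E.δ ij.2 (φ a)) * D_E.δ ij.1 x
        = D_E.δ k (φ a) * x := by
      rw [Finset.sum_eq_single_of_mem (0, k) (by simp [Finset.HasAntidiagonal.mem_antidiagonal]) ?_]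
      · rw [Function.iterate_zero_apply, D_E.δ_zero]
      · rintro ⟨i, j⟩ hij hne
        have hij' : i + j = k := Finset.HasAntidiagonal.mem_antidiagonal.mp hij
        have hi : 0 < i := by
          by_contra hcon
          push_neg at hcon
          have hi0 : i = 0 := by omega
          subst hi0
          have hj : j = k := by omega
          subst hj
          exact hne rfl
        rw [hx i hi, mul_zero]
    rw [hb] at h1
    refine ⟨D_R.δ k b, ?_⟩
    calc φ (D_R.δ k a) * x = D_E.δ k (φ a) * x := by rw [← hδE k a]
      _ = D_E.δ k (φ b) := by rw [← h2, ← h1]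
      _ = φ (D_R.δ k b) := hδE k b
  obtain ⟨⟨r0, s0⟩, hs0⟩ := IsLocalization.surj (nonZeroDivisors R) x
  have hs0I : (s0 : R) ∈ I := ⟨r0, by rw [mul_comm]; exact hs0⟩
  have hIbot : I ≠ ⊥ := by
    intro h0
    have hz : (s0 : R) = 0 := by
      have := hs0I
      rw [h0] at this
      exact Ideal.mem_bot.mp this
    exact nonZeroDivisors.ne_zero s0.2 hz
  rcases hsimple I hstab with h0 | h1
  · exact absurd h0 hIbot
  have h1I : (1 : R) ∈ I := h1 ▸ Submodule.mem_top
  obtain ⟨bR, hbR⟩ := h1I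
  have hxb : x = φ bR := by rw [← hbR, map_one, one_mul]
  have hbconst : ∀ k, 0 < k → D_R.δ k bR = 0 := by
    intro k hk
    have h2 : φ (D_R.δ k bR) = 0 := by rw [← hδE k bR, ← hxb, hx k hk]
    exact IsFractionRing.injective R (FractionRing R) (by rw [h2, map_zero])
  -- Step (b)
  suffices hb : ∃ μ : C, bR = algebraMap L R (algebraMap C L μ) by
    obtain ⟨μ, hμ⟩ := hb
    exact ⟨algebraMap C L μ, fun k hk => (hconst _).mpr ⟨μ, rfl⟩ k hk, by rw [hxb, hμ]⟩
  by_cases hball : ∃ μ : C, bR = algebraMap L R (algebraMap C L μ)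
  · exact hball
  exfalso
  push_neg at hball
  have hall : ∀ μ : C, IsUnit (bR - algebraMap L R (algebraMap C L μ)) := by
    intro μ
    have hconstmu : ∀ m, 0 < m → D_R.δ m (bR - algebraMap L R (algebraMap C L μ)) = 0 := by
      intro m hm
      rw [map_sub, hbconst m hm, hδ m _, (hconst _).mpr ⟨μ, rfl⟩ m hm, map_zero, sub_zero]
    have hstabμ : ∀ k : ℕ, ∀ a ∈ Ideal.span {bR - algebraMap L R (algebraMap C L μ)},
        D_R.δ k a ∈ Ideal.span {bR - algebraMap L R (algebraMap C L μ)} := by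
      intro k a ha
      obtain ⟨r, hr⟩ := Ideal.mem_span_singleton'.mp ha
      rw [← hr, IDqRingAux.delta_mul_const D_R k r _ hconstmu]
      exact Ideal.mem_span_singleton'.mpr ⟨D_R.δ k r, rfl⟩
    rcases hsimple _ hstabμ with hsp | hsp
    · exfalso
      apply hball μ
      have hmem : bR - algebraMap L R (algebraMap C L μ)
          ∈ Ideal.span {bR - algebraMap L R (algebraMap C L μ)} :=
        Ideal.mem_span_singleton_self _
      rw [hsp] at hmem
      exact sub_eq_zero.mp (Ideal.mem_bot.mp hmem)
    · exact Ideal.span_singleton_eq_top.mp hsp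
  -- algebraicity
  have hinjCL : Function.Injective (algebraMap C L) := RingHom.injective _
  have halg : IsAlgebraic L bR := by
    refine GLAux.units_imply_algebraic hfg bR (Set.range (algebraMap C L))
      (Set.infinite_range_of_injective hinjCL) ?_
    rintro l ⟨μ, rfl⟩
    exact hall μ
  -- minimal monic vanishing polynomial
  have hex : ∃ n : ℕ, ∃ p : Polynomial L, p.Monic ∧ Polynomial.aeval bR p = 0 ∧ p.natDegree = n := by
    obtain ⟨p0, hp00, hp0v⟩ := halg
    refine ⟨_, p0 * Polynomial.C p0.leadingCoeff⁻¹,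
      Polynomial.monic_mul_leadingCoeff_inv hp00, ?_, rfl⟩
    rw [map_mul, hp0v, zero_mul]
  obtain ⟨p, hpm, hpv, hpd⟩ := Nat.find_spec hex
  have hd1 : 1 ≤ p.natDegree := by
    by_contra hcon
    push_neg at hcon
    have h0 : p.natDegree = 0 := by omega
    have hp1 : p = 1 := (Polynomial.Monic.natDegree_eq_zero hpm).mp h0
    rw [hp1, map_one] at hpv
    exact one_ne_zero hpv
  -- coefficients of p are constants
  have hcoeffconst : ∀ i : ℕ, ∀ k, 0 < k → D_L.δ k (p.coeff i) = 0 := by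
    have hmain : ∀ k, 0 < k →
        (∑ i ∈ Finset.range (p.natDegree + 1),
          Polynomial.C (D_L.δ k (p.coeff i)) * Polynomial.X ^ i : Polynomial L) = 0 := by
      intro k hk
      set qk : Polynomial L := ∑ i ∈ Finset.range (p.natDegree + 1),
        Polynomial.C (D_L.δ k (p.coeff i)) * Polynomial.X ^ i with hqk
      have h1 : Polynomial.aeval bR p
          = ∑ i ∈ Finset.range (p.natDegree + 1), algebraMap L R (p.coeff i) * bR ^ i := by
        rw [Polynomial.aeval_eq_sum_range]
        exact Finset.sum_congr rfl (fun i _ => Algebra.smul_def _ _)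
      have h2 : D_R.δ k (Polynomial.aeval bR p)
          = ∑ i ∈ Finset.range (p.natDegree + 1),
              algebraMap L R (D_L.δ k (p.coeff i)) * bR ^ i := by
        rw [h1, map_sum]
        refine Finset.sum_congr rfl ?_
        intro i _
        rw [IDqRingAux.delta_mul_const D_R k _ _ (IDqRingAux.const_pow D_R bR hbconst i), hδ]
      rw [hpv, map_zero] at h2
      -- coefficients of qk
      have hcoeff : ∀ j : ℕ, qk.coeff j
          = if j ∈ Finset.range (p.natDegree + 1) then D_L.δ k (p.coeff j) else 0 := by
        intro j
        rw [hqk, Polynomial.finset_sum_coeff]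
        rw [Finset.sum_congr rfl (fun i (_ : i ∈ Finset.range (p.natDegree + 1)) => by
          rw [Polynomial.coeff_C_mul, Polynomial.coeff_X_pow])]
        simp only [mul_ite, mul_one, mul_zero]
        rw [Finset.sum_ite_eq (Finset.range (p.natDegree + 1)) j
          (fun i => D_L.δ k (p.coeff i))]
      by_contra hq0
      -- qk ≠ 0 : build smaller monic vanishing polynomial
      have haq : Polynomial.aeval bR qk = 0 := by
        have hterm : Polynomial.aeval bR qk
            = ∑ i ∈ Finset.range (p.natDegree + 1),
                algebraMap L R (D_L.δ k (p.coeff i)) * bR ^ i := by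
          rw [hqk, map_sum]
          refine Finset.sum_congr rfl ?_
          intro i _
          rw [map_mul, Polynomial.aeval_C, map_pow, Polynomial.aeval_X]
        rw [hterm]
        exact h2.symm
      have hqtop : qk.coeff p.natDegree = 0 := by
        rw [hcoeff]
        simp only [Finset.mem_range, lt_add_iff_pos_left]
        rw [if_pos (by omega)]
        rw [Polynomial.Monic.coeff_natDegree hpm]
        exact IDqRingAux.delta_one D_L k hk
      have hqd : qk.natDegree < p.natDegree := by
        have hle : qk.natDegree ≤ p.natDegree := by
          apply Polynomial.natDegree_le_iff_coeff_eq_zero.mpr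
          intro j hj
          rw [hcoeff]
          rw [if_neg (by simp only [Finset.mem_range]; omega)]
        rcases lt_or_eq_of_le hle with h | h
        · exact h
        · exfalso
          apply hq0
          have : qk.leadingCoeff = 0 := by
            rw [Polynomial.leadingCoeff, h, hqtop]
          exact Polynomial.leadingCoeff_eq_zero.mp this
      have hfind := Nat.find_min' hex ⟨qk * Polynomial.C qk.leadingCoeff⁻¹,
        Polynomial.monic_mul_leadingCoeff_inv hq0, by rw [map_mul, haq, zero_mul], rfl⟩
      have hdeg2 : (qk * Polynomial.C qk.leadingCoeff⁻¹).natDegree = qk.natDegree := by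
        rw [Polynomial.natDegree_mul hq0 (Polynomial.C_ne_zero.mpr
          (inv_ne_zero (Polynomial.leadingCoeff_ne_zero.mpr hq0))), Polynomial.natDegree_C,
          add_zero]
      omega
    intro i k hk
    by_cases hi : i ∈ Finset.range (p.natDegree + 1)
    · have := hmain k hk
      have hcoeffz := congrArg (fun r => Polynomial.coeff r i) this
      simp only [Polynomial.finset_sum_coeff, Polynomial.coeff_C_mul, Polynomial.coeff_X_pow,
        Polynomial.coeff_zero] at hcoeffz
      rw [Finset.sum_congr rfl (fun j (_ : j ∈ Finset.range (p.natDegree + 1)) => rfl)] at hcoeffz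
      simp only [mul_ite, mul_one, mul_zero] at hcoeffz
      rw [Finset.sum_ite_eq (Finset.range (p.natDegree + 1)) i
        (fun j => D_L.δ k (p.coeff j)), if_pos hi] at hcoeffz
      exact hcoeffz
    · have hpz : p.coeff i = 0 := by
        apply Polynomial.coeff_eq_zero_of_natDegree_lt
        simp only [Finset.mem_range] at hi
        omega
      rw [hpz, map_zero]
  have hcoeffrange : ∀ i : ℕ, ∃ μ : C, p.coeff i = algebraMap C L μ := by
    intro i
    obtain ⟨μ, hμ⟩ := (hconst (p.coeff i)).mp (hcoeffconst i)
    exact ⟨μ, hμ.symm⟩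
  choose μfun hμfun using hcoeffrange
  set P : Polynomial C := ∑ i ∈ Finset.range (p.natDegree + 1),
    Polynomial.C (μfun i) * Polynomial.X ^ i with hP
  have hPcoeff : ∀ j : ℕ, P.coeff j
      = if j ∈ Finset.range (p.natDegree + 1) then μfun j else 0 := by
    intro j
    rw [hP, Polynomial.finset_sum_coeff]
    rw [Finset.sum_congr rfl (fun i (_ : i ∈ Finset.range (p.natDegree + 1)) => by
      rw [Polynomial.coeff_C_mul, Polynomial.coeff_X_pow])]
    simp only [mul_ite, mul_one, mul_zero]
    rw [Finset.sum_ite_eq (Finset.range (p.natDegree + 1)) j μfun]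
  have hPmap : P.map (algebraMap C L) = p := by
    ext j
    rw [Polynomial.coeff_map, hPcoeff]
    by_cases hj : j ∈ Finset.range (p.natDegree + 1)
    · rw [if_pos hj, ← hμfun j]
    · rw [if_neg hj, map_zero]
      symm
      apply Polynomial.coeff_eq_zero_of_natDegree_lt
      simp only [Finset.mem_range] at hj
      omega
  have hP0 : P ≠ 0 := by
    intro h0
    have : p = 0 := by rw [← hPmap, h0, Polynomial.map_zero]
    rw [this] at hd1
    simp at hd1
  -- evaluation of nonzero C-polynomials at bR is nonzero
  set ψ : C →+* R := (algebraMap L R).comp (algebraMap C L) with hψ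
  have hnz : ∀ n : ℕ, ∀ P' : Polynomial C, P' ≠ 0 → P'.natDegree ≤ n →
      Polynomial.eval₂ ψ bR P' ≠ 0 := by
    intro n
    induction n with
    | zero =>
      intro P' hP'0 hdeg
      obtain ⟨c, hc⟩ := Polynomial.natDegree_eq_zero.mp (by omega : P'.natDegree = 0)
      rw [← hc, Polynomial.eval₂_C]
      have hc0 : c ≠ 0 := by
        intro h0
        apply hP'0
        rw [← hc, h0, map_zero]
      exact ((isUnit_iff_ne_zero.mpr hc0).map ψ).ne_zero
    | succ n ih =>
      intro P' hP'0 hdeg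
      by_cases hd0 : P'.natDegree = 0
      · obtain ⟨c, hc⟩ := Polynomial.natDegree_eq_zero.mp hd0
        rw [← hc, Polynomial.eval₂_C]
        have hc0 : c ≠ 0 := by
          intro h0
          apply hP'0
          rw [← hc, h0, map_zero]
        exact ((isUnit_iff_ne_zero.mpr hc0).map ψ).ne_zero
      · have hdeg0 : P'.degree ≠ 0 := by
          intro h0
          exact hd0 (Polynomial.natDegree_eq_zero_iff_degree_le_zero.mpr (le_of_eq h0))
        obtain ⟨μ0, hroot⟩ := IsAlgClosed.exists_root P' hdeg0
        obtain ⟨Q, hQ⟩ := Polynomial.dvd_iff_isRoot.mpr hroot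
        have hQ0 : Q ≠ 0 := by
          intro h0
          apply hP'0
          rw [hQ, h0, mul_zero]
        have hdegQ : P'.natDegree = 1 + Q.natDegree := by
          rw [hQ, Polynomial.natDegree_mul (Polynomial.X_sub_C_ne_zero μ0) hQ0,
            Polynomial.natDegree_X_sub_C]
        have hIH := ih Q hQ0 (by omega)
        rw [hQ, Polynomial.eval₂_mul, Polynomial.eval₂_sub, Polynomial.eval₂_X,
          Polynomial.eval₂_C]
        intro hzero
        have hunit : IsUnit (bR - ψ μ0) := by
          rw [hψ, RingHom.comp_apply]
          exact hall μ0
        obtain ⟨u, hu⟩ := hunit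
        apply hIH
        calc Polynomial.eval₂ ψ bR Q
            = ((u⁻¹ : Rˣ) : R) * ((bR - ψ μ0) * Polynomial.eval₂ ψ bR Q) := by
              rw [← mul_assoc, ← hu, Units.inv_mul, one_mul]
          _ = 0 := by rw [hzero, mul_zero]
  apply hnz P.natDegree P hP0 le_rfl
  rw [← Polynomial.eval₂_map]
  rw [hPmap, ← Polynomial.aeval_def]
  exact hpv
end
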